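/- arXiv:2210.12325 — 2 statements merged into one kernel-verified Lean document; each statement's English description precedes it below -/
import Mathlib

section
/- For every n ≥ 0, R_n(x) = Σ_{k=0}^{n} C(n,k)·Λ_k(x)·Λ_{n−k}(x), where C(n,k) is the binomial coefficient; equivalently, the exponential generating function of the alternating-run polynomials R_n(x) is the square of the exponential generating function of the up-down run polynomials Λ_n(x). -/
/-- The `i`-th entry (1-indexed) of the permutation `σ` of `[n]`, with the
convention that positions `0` and `> n` carry the entry `0`. -/
def permEntry (n : ℕ) (σ : Equiv.Perm (Fin n)) (i : ℕ) : ℕ :=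
  if h : 1 ≤ i ∧ i ≤ n then ((σ ⟨i - 1, by omega⟩ : Fin n) : ℕ) + 1 else 0

/-- The number of left peaks of `σ`: indices `1 ≤ i ≤ n-1` with
`σ_{i-1} < σ_i > σ_{i+1}`, convention `σ₀ = 0`. -/
def leftPeakCount (n : ℕ) (σ : Equiv.Perm (Fin n)) : ℕ :=
  ((Finset.Icc 1 (n - 1)).filter fun i =>
    permEntry n σ (i - 1) < permEntry n σ i ∧ permEntry n σ (i + 1) < permEntry n σ i).card

/-- The number of exterior peaks of `σ`: indices `1 ≤ i ≤ n` with
`σ_{i-1} < σ_i > σ_{i+1}`, conventions `σ₀ = σ_{n+1} = 0`. -/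
def extPeakCount (n : ℕ) (σ : Equiv.Perm (Fin n)) : ℕ :=
  ((Finset.Icc 1 n).filter fun i =>
    permEntry n σ (i - 1) < permEntry n σ i ∧ permEntry n σ (i + 1) < permEntry n σ i).card

/-- The number of interior peaks of `σ`: indices `2 ≤ i ≤ n-1` with
`σ_{i-1} < σ_i > σ_{i+1}`. -/
def intPeakCount (n : ℕ) (σ : Equiv.Perm (Fin n)) : ℕ :=
  ((Finset.Icc 2 (n - 1)).filter fun i =>
    permEntry n σ (i - 1) < permEntry n σ i ∧ permEntry n σ (i + 1) < permEntry n σ i).card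

/-- The number of up-down runs of `σ`: maximal monotone segments of the
extended sequence `0, σ₁, …, σₙ`, i.e. one more than the number of direction
changes of that sequence (and `0` for `n = 0`). -/
def udRunCount (n : ℕ) (σ : Equiv.Perm (Fin n)) : ℕ :=
  if n = 0 then 0 else
    1 + ((Finset.Icc 1 (n - 1)).filter fun i =>
      (permEntry n σ (i - 1) < permEntry n σ i ∧ permEntry n σ (i + 1) < permEntry n σ i) ∨
      (permEntry n σ i < permEntry n σ (i - 1) ∧ permEntry n σ i < permEntry n σ (i + 1))).card

/-- The number of alternating runs of `σ`: maximal monotone segments of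
`σ₁, …, σₙ`, i.e. one more than the number of direction changes (and `0` for `n = 0`). -/
def altRunCount (n : ℕ) (σ : Equiv.Perm (Fin n)) : ℕ :=
  if n = 0 then 0 else
    1 + ((Finset.Icc 2 (n - 1)).filter fun i =>
      (permEntry n σ (i - 1) < permEntry n σ i ∧ permEntry n σ (i + 1) < permEntry n σ i) ∨
      (permEntry n σ i < permEntry n σ (i - 1) ∧ permEntry n σ i < permEntry n σ (i + 1))).card

/-- `L n k` : the number of permutations of `[n]` with exactly `k` left peaks. -/
def leftPeakNum (n k : ℕ) : ℕ :=
  (Finset.univ.filter fun σ : Equiv.Perm (Fin n) => leftPeakCount n σ = k).card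

/-- `W n k` : the number of permutations of `[n]` with exactly `k` exterior peaks. -/
def extPeakNum (n k : ℕ) : ℕ :=
  (Finset.univ.filter fun σ : Equiv.Perm (Fin n) => extPeakCount n σ = k).card

/-- `M n k` : the number of permutations of `[n]` with exactly `k` interior peaks. -/
def intPeakNum (n k : ℕ) : ℕ :=
  (Finset.univ.filter fun σ : Equiv.Perm (Fin n) => intPeakCount n σ = k).card

/-- `Λ n k` : the number of permutations of `[n]` with exactly `k` up-down runs. -/
def udRunNum (n k : ℕ) : ℕ :=
  (Finset.univ.filter fun σ : Equiv.Perm (Fin n) => udRunCount n σ = k).card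

/-- `R n k` : the number of permutations of `[n]` with exactly `k` alternating runs. -/
def altRunNum (n k : ℕ) : ℕ :=
  (Finset.univ.filter fun σ : Equiv.Perm (Fin n) => altRunCount n σ = k).card

/-- The up-down run polynomial `Λ_n(x) = Σ_k Λ(n,k)·x^k` (so `Λ_0(x) = 1`). -/
noncomputable def UDpoly (n : ℕ) : Polynomial ℚ :=
  ∑ k ∈ Finset.range (n + 1), (udRunNum n k : Polynomial ℚ) * Polynomial.X ^ k

/-- The alternating-run polynomial `R_n(x) = Σ_{k=1}^{n} R(n+1,k)·x^k`, with `R_0(x) = 1`. -/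
noncomputable def Rpoly (n : ℕ) : Polynomial ℚ :=
  if n = 0 then 1 else
    ∑ k ∈ Finset.Icc 1 n, (altRunNum (n + 1) k : Polynomial ℚ) * Polynomial.X ^ k

section Aux14

variable {n k : ℕ}

/-- value map for the left block -/
def mLf (s : Finset (Fin n)) (hs : s.card = k) : Fin k → Fin n :=
  fun i => (s.orderIsoOfFin hs i : Fin n)

lemma compl_card (s : Finset (Fin n)) (hs : s.card = k) (hk : k ≤ n) : sᶜ.card = n - k := by
  rw [Finset.card_compl, hs, Fintype.card_fin]

def mRf (s : Finset (Fin n)) (hs : s.card = k) (hk : k ≤ n) : Fin (n - k) → Fin n :=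
  fun i => ((sᶜ).orderIsoOfFin (compl_card s hs hk) i : Fin n)

lemma mLf_lt_iff (s : Finset (Fin n)) (hs : s.card = k) (a b : Fin k) :
    mLf s hs a < mLf s hs b ↔ a < b :=
  Iff.trans Subtype.coe_lt_coe ((s.orderIsoOfFin hs).lt_iff_lt)

lemma mRf_lt_iff (s : Finset (Fin n)) (hs : s.card = k) (hk : k ≤ n) (a b : Fin (n-k)) :
    mRf s hs hk a < mRf s hs hk b ↔ a < b :=
  Iff.trans Subtype.coe_lt_coe (((sᶜ).orderIsoOfFin (compl_card s hs hk)).lt_iff_lt)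

lemma mLf_inj (s : Finset (Fin n)) (hs : s.card = k) : Function.Injective (mLf s hs) :=
  fun a b h => (s.orderIsoOfFin hs).injective (Subtype.coe_injective h)

lemma mRf_inj (s : Finset (Fin n)) (hs : s.card = k) (hk : k ≤ n) :
    Function.Injective (mRf s hs hk) :=
  fun a b h => ((sᶜ).orderIsoOfFin (compl_card s hs hk)).injective (Subtype.coe_injective h)

lemma mLf_mem (s : Finset (Fin n)) (hs : s.card = k) (a : Fin k) : mLf s hs a ∈ s :=
  (s.orderIsoOfFin hs a).2

lemma mRf_mem (s : Finset (Fin n)) (hs : s.card = k) (hk : k ≤ n) (a : Fin (n-k)) :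
    mRf s hs hk a ∈ sᶜ :=
  ((sᶜ).orderIsoOfFin (compl_card s hs hk) a).2

/-- the underlying function of the constructed permutation -/
def bFun (n k : ℕ) (hk : k ≤ n) (s : Finset (Fin n)) (hs : s.card = k)
    (τ : Equiv.Perm (Fin k)) (ρ : Equiv.Perm (Fin (n - k))) : Fin (n+1) → Fin (n+1) :=
  fun q =>
    if h : (q : ℕ) < k then
      Fin.castSucc (mLf s hs ((τ (Fin.rev ⟨(q : ℕ), h⟩)).rev))
    else if h2 : (q : ℕ) = k then Fin.last n
    else
      Fin.castSucc (mRf s hs hk ((ρ ⟨(q : ℕ) - k - 1, by have := q.isLt; omega⟩).rev))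

lemma bFun_inj (hk : k ≤ n) (s : Finset (Fin n)) (hs : s.card = k)
    (τ : Equiv.Perm (Fin k)) (ρ : Equiv.Perm (Fin (n - k))) :
    Function.Injective (bFun n k hk s hs τ ρ) := by
  intro q1 q2 he
  unfold bFun at he
  have h1 := q1.isLt
  have h2 := q2.isLt
  split_ifs at he with a1 a2 a3 a4 a5 a6 a7 a8
  · -- left left
    rw [Fin.castSucc_inj] at he
    have h3 := Fin.rev_injective (Equiv.injective τ (Fin.rev_injective (mLf_inj s hs he)))
    have h4 : (q1 : ℕ) = q2 := by simpa using h3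
    exact Fin.ext h4
  · -- left mid
    exact absurd he (Fin.castSucc_lt_last _).ne
  · -- left right
    rw [Fin.castSucc_inj] at he
    have hm := mRf_mem s hs hk ((ρ ⟨(q2 : ℕ) - k - 1, by omega⟩).rev)
    rw [← he] at hm
    exact absurd (mLf_mem s hs _) (Finset.mem_compl.mp hm)
  · -- mid left
    exact absurd he.symm (Fin.castSucc_lt_last _).ne
  · -- mid mid
    exact Fin.ext (by omega)
  · -- mid right
    exact absurd he.symm (Fin.castSucc_lt_last _).ne
  · -- right left
    rw [Fin.castSucc_inj] at he
    have hm := mRf_mem s hs hk ((ρ ⟨(q1 : ℕ) - k - 1, by omega⟩).rev)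
    rw [he] at hm
    exact absurd (mLf_mem s hs _) (Finset.mem_compl.mp hm)
  · -- right mid
    exact absurd he (Fin.castSucc_lt_last _).ne
  · -- right right
    rw [Fin.castSucc_inj] at he
    have h5 := Equiv.injective ρ (Fin.rev_injective (mRf_inj s hs hk he))
    have h3 : (q1 : ℕ) - k - 1 = (q2 : ℕ) - k - 1 := by simpa using h5
    exact Fin.ext (by omega)

/-- the constructed permutation -/
noncomputable def buildPerm (n k : ℕ) (hk : k ≤ n) (s : Finset (Fin n)) (hs : s.card = k)
    (τ : Equiv.Perm (Fin k)) (ρ : Equiv.Perm (Fin (n - k))) : Equiv.Perm (Fin (n+1)) :=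
  Equiv.ofBijective _ ((Finite.injective_iff_bijective).mp (bFun_inj hk s hs τ ρ))

lemma buildPerm_apply (hk : k ≤ n) (s : Finset (Fin n)) (hs : s.card = k)
    (τ : Equiv.Perm (Fin k)) (ρ : Equiv.Perm (Fin (n - k))) (q : Fin (n+1)) :
    buildPerm n k hk s hs τ ρ q = bFun n k hk s hs τ ρ q := rfl


lemma pe_zero (m : ℕ) (σ : Equiv.Perm (Fin m)) : permEntry m σ 0 = 0 := by
  unfold permEntry; rw [dif_neg]; omega

lemma pe_val (m : ℕ) (σ : Equiv.Perm (Fin m)) (i : ℕ) (h1 : 1 ≤ i) (h2 : i ≤ m) :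
    permEntry m σ i = (σ ⟨i - 1, by omega⟩ : ℕ) + 1 := by
  unfold permEntry; rw [dif_pos ⟨h1, h2⟩]

lemma pe_pos (m : ℕ) (σ : Equiv.Perm (Fin m)) (i : ℕ) (h1 : 1 ≤ i) (h2 : i ≤ m) :
    1 ≤ permEntry m σ i := by rw [pe_val m σ i h1 h2]; omega

lemma E_left {n k : ℕ} (hk : k ≤ n) (s : Finset (Fin n)) (hs : s.card = k)
    (τ : Equiv.Perm (Fin k)) (ρ : Equiv.Perm (Fin (n - k)))
    (i : ℕ) (h1 : 1 ≤ i) (h2 : i ≤ k) :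
    permEntry (n+1) (buildPerm n k hk s hs τ ρ) i
      = (mLf s hs ((τ ⟨k - i, by omega⟩).rev) : ℕ) + 1 := by
  rw [pe_val (n+1) _ i h1 (by omega), buildPerm_apply]
  unfold bFun
  rw [dif_pos (show ((⟨i - 1, by omega⟩ : Fin (n+1)) : ℕ) < k by simp; omega)]
  rw [Fin.coe_castSucc]
  refine congrArg (fun z : Fin k => ((mLf s hs ((τ z).rev) : ℕ) + 1)) (Fin.ext ?_)
  rw [Fin.val_rev]
  show k - ((i - 1) + 1) = k - i
  omega

lemma E_mid {n k : ℕ} (hk : k ≤ n) (s : Finset (Fin n)) (hs : s.card = k)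
    (τ : Equiv.Perm (Fin k)) (ρ : Equiv.Perm (Fin (n - k))) :
    permEntry (n+1) (buildPerm n k hk s hs τ ρ) (k+1) = n + 1 := by
  rw [pe_val (n+1) _ (k+1) (by omega) (by omega), buildPerm_apply]
  unfold bFun
  rw [dif_neg (by simp), dif_pos (by simp)]
  simp [Fin.val_last]

lemma E_right {n k : ℕ} (hk : k ≤ n) (s : Finset (Fin n)) (hs : s.card = k)
    (τ : Equiv.Perm (Fin k)) (ρ : Equiv.Perm (Fin (n - k)))
    (i : ℕ) (h1 : k + 2 ≤ i) (h2 : i ≤ n + 1) :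
    permEntry (n+1) (buildPerm n k hk s hs τ ρ) i
      = (mRf s hs hk ((ρ ⟨i - k - 2, by omega⟩).rev) : ℕ) + 1 := by
  rw [pe_val (n+1) _ i (by omega) h2, buildPerm_apply]
  unfold bFun
  rw [dif_neg (by simp; omega), dif_neg (by simp; omega)]
  rw [Fin.coe_castSucc]
  refine congrArg (fun z : Fin (n - k) => ((mRf s hs hk ((ρ z).rev) : ℕ) + 1)) (Fin.ext ?_)
  show (i - 1) - k - 1 = i - k - 2
  omega

lemma F_val' {k : ℕ} (τ : Equiv.Perm (Fin k)) (p : ℕ) (h1 : 1 ≤ p) (h2 : p ≤ k) :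
    permEntry k τ (k + 1 - p) = (τ ⟨k - p, by omega⟩ : ℕ) + 1 := by
  rw [pe_val k τ (k+1-p) (by omega) (by omega)]
  refine congrArg (fun z : Fin k => ((τ z : ℕ) + 1)) (Fin.ext ?_)
  show k + 1 - p - 1 = k - p
  omega

lemma G_val' {n k : ℕ} (ρ : Equiv.Perm (Fin (n - k))) (p : ℕ) (h1 : k + 2 ≤ p) (h2 : p ≤ n + 1) :
    permEntry (n - k) ρ (p - k - 1) = (ρ ⟨p - k - 2, by omega⟩ : ℕ) + 1 := by
  rw [pe_val (n-k) ρ (p-k-1) (by omega) (by omega)]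
  refine congrArg (fun z : Fin (n - k) => ((ρ z : ℕ) + 1)) (Fin.ext ?_)
  show p - k - 1 - 1 = p - k - 2
  omega

lemma lt_iff_LL {n k : ℕ} (hk : k ≤ n) (s : Finset (Fin n)) (hs : s.card = k)
    (τ : Equiv.Perm (Fin k)) (ρ : Equiv.Perm (Fin (n - k)))
    (p1 p2 : ℕ) (ha : 1 ≤ p1) (hb : p1 ≤ k + 1) (hc : 1 ≤ p2) (hd : p2 ≤ k + 1) :
    (permEntry (n+1) (buildPerm n k hk s hs τ ρ) p1
      < permEntry (n+1) (buildPerm n k hk s hs τ ρ) p2)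
    ↔ permEntry k τ (k + 1 - p2) < permEntry k τ (k + 1 - p1) := by
  rcases eq_or_lt_of_le hb with h1 | h1 <;> rcases eq_or_lt_of_le hd with h2 | h2
  · rw [h1, h2]; simp
  · -- p1 = k+1, p2 ≤ k : both sides false
    subst h1
    rw [E_mid hk s hs τ ρ, E_left hk s hs τ ρ p2 hc (by omega), F_val' τ p2 hc (by omega),
      show k + 1 - (k+1) = 0 by omega, pe_zero]
    have := (mLf s hs ((τ ⟨k - p2, by omega⟩).rev)).isLt
    constructor <;> intro h <;> omega
  · -- p1 ≤ k, p2 = k+1 : both sides true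
    subst h2
    rw [E_mid hk s hs τ ρ, E_left hk s hs τ ρ p1 ha (by omega), F_val' τ p1 ha (by omega),
      show k + 1 - (k+1) = 0 by omega, pe_zero]
    have := (mLf s hs ((τ ⟨k - p1, by omega⟩).rev)).isLt
    constructor <;> intro h <;> omega
  · -- both ≤ k
    rw [E_left hk s hs τ ρ p1 ha (by omega), E_left hk s hs τ ρ p2 hc (by omega),
      F_val' τ p1 ha (by omega), F_val' τ p2 hc (by omega)]
    have key : (mLf s hs ((τ ⟨k - p1, by omega⟩).rev) : ℕ) < (mLf s hs ((τ ⟨k - p2, by omega⟩).rev) : ℕ)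
        ↔ (τ ⟨k - p2, by omega⟩ : ℕ) < (τ ⟨k - p1, by omega⟩ : ℕ) := by
      rw [show ((mLf s hs ((τ ⟨k - p1, by omega⟩).rev) : ℕ) < (mLf s hs ((τ ⟨k - p2, by omega⟩).rev) : ℕ))
          ↔ (mLf s hs ((τ ⟨k - p1, by omega⟩).rev) < mLf s hs ((τ ⟨k - p2, by omega⟩).rev)) from Iff.rfl,
        mLf_lt_iff, Fin.rev_lt_rev]
      exact Iff.rfl
    omega

lemma lt_iff_RR {n k : ℕ} (hk : k ≤ n) (s : Finset (Fin n)) (hs : s.card = k)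
    (τ : Equiv.Perm (Fin k)) (ρ : Equiv.Perm (Fin (n - k)))
    (p1 p2 : ℕ) (ha : k + 1 ≤ p1) (hb : p1 ≤ n + 1) (hc : k + 1 ≤ p2) (hd : p2 ≤ n + 1) :
    (permEntry (n+1) (buildPerm n k hk s hs τ ρ) p1
      < permEntry (n+1) (buildPerm n k hk s hs τ ρ) p2)
    ↔ permEntry (n - k) ρ (p2 - k - 1) < permEntry (n - k) ρ (p1 - k - 1) := by
  rcases eq_or_lt_of_le ha with h1 | h1 <;> rcases eq_or_lt_of_le hc with h2 | h2
  · rw [← h1, ← h2]; simp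
  · -- p1 = k+1, p2 ≥ k+2 : both sides false
    rw [← h1, E_mid hk s hs τ ρ, E_right hk s hs τ ρ p2 h2 hd, G_val' ρ p2 h2 hd,
      show k + 1 - k - 1 = 0 by omega, pe_zero]
    have := (mRf s hs hk ((ρ ⟨p2 - k - 2, by omega⟩).rev)).isLt
    constructor <;> intro h <;> omega
  · -- p2 = k+1, p1 ≥ k+2 : both true
    rw [← h2, E_mid hk s hs τ ρ, E_right hk s hs τ ρ p1 h1 hb, G_val' ρ p1 h1 hb,
      show k + 1 - k - 1 = 0 by omega, pe_zero]
    have := (mRf s hs hk ((ρ ⟨p1 - k - 2, by omega⟩).rev)).isLt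
    constructor <;> intro h <;> omega
  · rw [E_right hk s hs τ ρ p1 h1 hb, E_right hk s hs τ ρ p2 h2 hd,
      G_val' ρ p1 h1 hb, G_val' ρ p2 h2 hd]
    have key : (mRf s hs hk ((ρ ⟨p1 - k - 2, by omega⟩).rev) : ℕ) < (mRf s hs hk ((ρ ⟨p2 - k - 2, by omega⟩).rev) : ℕ)
        ↔ (ρ ⟨p2 - k - 2, by omega⟩ : ℕ) < (ρ ⟨p1 - k - 2, by omega⟩ : ℕ) := by
      rw [show ((mRf s hs hk ((ρ ⟨p1 - k - 2, by omega⟩).rev) : ℕ) < (mRf s hs hk ((ρ ⟨p2 - k - 2, by omega⟩).rev) : ℕ))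
          ↔ (mRf s hs hk ((ρ ⟨p1 - k - 2, by omega⟩).rev) < mRf s hs hk ((ρ ⟨p2 - k - 2, by omega⟩).rev)) from Iff.rfl,
        mRf_lt_iff, Fin.rev_lt_rev]
      exact Iff.rfl
    omega



lemma card_filter_split (P : ℕ → Prop) [DecidablePred P] (a m b : ℕ) (h1 : a ≤ m + 1) (h2 : m ≤ b) :
    ((Finset.Icc a b).filter P).card
      = ((Finset.Icc a m).filter P).card + ((Finset.Icc (m+1) b).filter P).card := by
  have hu : Finset.Icc a b = Finset.Icc a m ∪ Finset.Icc (m+1) b := by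
    ext i; simp only [Finset.mem_Icc, Finset.mem_union]; omega
  rw [hu, Finset.filter_union, Finset.card_union_of_disjoint]
  refine Finset.disjoint_filter_filter ?_
  rw [Finset.disjoint_left]
  intro x hx hy
  simp only [Finset.mem_Icc] at hx hy
  omega

lemma card_filter_shift (P Q : ℕ → Prop) [DecidablePred P] [DecidablePred Q] (a b d : ℕ)
    (hd : d ≤ a) (hdb : d ≤ b) (h : ∀ i, a ≤ i → i ≤ b → (P i ↔ Q (i - d))) :
    ((Finset.Icc a b).filter P).card = ((Finset.Icc (a - d) (b - d)).filter Q).card := by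
  refine Finset.card_bij' (fun i _ => i - d) (fun j _ => j + d) ?_ ?_ ?_ ?_
  · intro i hi
    simp only [Finset.mem_filter, Finset.mem_Icc] at hi ⊢
    refine ⟨by omega, ?_⟩
    exact (h i hi.1.1 hi.1.2).mp hi.2
  · intro j hj
    simp only [Finset.mem_filter, Finset.mem_Icc] at hj ⊢
    refine ⟨by omega, ?_⟩
    have := h (j + d) (by omega) (by omega)
    rw [show j + d - d = j by omega] at this
    exact this.mpr hj.2
  · intro i hi
    simp only [Finset.mem_filter, Finset.mem_Icc] at hi
    show i - d + d = i
    omega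
  · intro j hj
    simp only [Finset.mem_filter, Finset.mem_Icc] at hj
    show j + d - d = j
    omega
lemma card_filter_reflect (P Q : ℕ → Prop) [DecidablePred P] [DecidablePred Q] (a b c : ℕ)
    (hb : b ≤ c) (hac : a ≤ c) (h : ∀ i, a ≤ i → i ≤ b → (P i ↔ Q (c - i))) :
    ((Finset.Icc a b).filter P).card = ((Finset.Icc (c - b) (c - a)).filter Q).card := by
  refine Finset.card_bij' (fun i _ => c - i) (fun j _ => c - j) ?_ ?_ ?_ ?_
  · intro i hi
    simp only [Finset.mem_filter, Finset.mem_Icc] at hi ⊢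
    refine ⟨by omega, (h i hi.1.1 hi.1.2).mp hi.2⟩
  · intro j hj
    simp only [Finset.mem_filter, Finset.mem_Icc] at hj ⊢
    refine ⟨by omega, ?_⟩
    have := h (c - j) (by omega) (by omega)
    rw [show c - (c - j) = j by omega] at this
    exact this.mpr hj.2
  · intro i hi
    simp only [Finset.mem_filter, Finset.mem_Icc] at hi
    show c - (c - i) = i
    omega
  · intro j hj
    simp only [Finset.mem_filter, Finset.mem_Icc] at hj
    show c - (c - j) = j
    omega

section Stat

variable {n k : ℕ}

/-- turn-predicate abbreviation -/
def turnp (m : ℕ) (σ : Equiv.Perm (Fin m)) (i : ℕ) : Prop :=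
  (permEntry m σ (i - 1) < permEntry m σ i ∧ permEntry m σ (i + 1) < permEntry m σ i) ∨
  (permEntry m σ i < permEntry m σ (i - 1) ∧ permEntry m σ i < permEntry m σ (i + 1))

instance turnp_dec (m : ℕ) (σ : Equiv.Perm (Fin m)) : DecidablePred (turnp m σ) := fun i => by
  unfold turnp; infer_instance

lemma altRunCount_eq (m : ℕ) (σ : Equiv.Perm (Fin m)) (hm : m ≠ 0) :
    altRunCount m σ = 1 + ((Finset.Icc 2 (m - 1)).filter (turnp m σ)).card := by
  unfold altRunCount turnp
  rw [if_neg hm]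

lemma udRunCount_eq (m : ℕ) (σ : Equiv.Perm (Fin m)) (hm : m ≠ 0) :
    udRunCount m σ = 1 + ((Finset.Icc 1 (m - 1)).filter (turnp m σ)).card := by
  unfold udRunCount turnp
  rw [if_neg hm]

lemma udRunCount_zero (σ : Equiv.Perm (Fin 0)) : udRunCount 0 σ = 0 := rfl

lemma CE_left (hk : k ≤ n) (s : Finset (Fin n)) (hs : s.card = k)
    (τ : Equiv.Perm (Fin k)) (ρ : Equiv.Perm (Fin (n - k)))
    (i : ℕ) (h2 : 2 ≤ i) (hik : i ≤ k) :
    turnp (n+1) (buildPerm n k hk s hs τ ρ) i ↔ turnp k τ (k + 1 - i) := by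
  have e1 := lt_iff_LL hk s hs τ ρ (i-1) i (by omega) (by omega) (by omega) (by omega)
  have e2 := lt_iff_LL hk s hs τ ρ i (i-1) (by omega) (by omega) (by omega) (by omega)
  have e3 := lt_iff_LL hk s hs τ ρ (i+1) i (by omega) (by omega) (by omega) (by omega)
  have e4 := lt_iff_LL hk s hs τ ρ i (i+1) (by omega) (by omega) (by omega) (by omega)
  rw [show k + 1 - (i-1) = k + 1 - i + 1 by omega] at e1 e2
  rw [show k + 1 - (i+1) = k + 1 - i - 1 by omega] at e3 e4
  unfold turnp
  tauto

lemma CE_right (hk : k ≤ n) (s : Finset (Fin n)) (hs : s.card = k)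
    (τ : Equiv.Perm (Fin k)) (ρ : Equiv.Perm (Fin (n - k)))
    (i : ℕ) (h2 : k + 2 ≤ i) (hin : i ≤ n) :
    turnp (n+1) (buildPerm n k hk s hs τ ρ) i ↔ turnp (n - k) ρ (i - k - 1) := by
  have e1 := lt_iff_RR hk s hs τ ρ (i-1) i (by omega) (by omega) (by omega) (by omega)
  have e2 := lt_iff_RR hk s hs τ ρ i (i-1) (by omega) (by omega) (by omega) (by omega)
  have e3 := lt_iff_RR hk s hs τ ρ (i+1) i (by omega) (by omega) (by omega) (by omega)
  have e4 := lt_iff_RR hk s hs τ ρ i (i+1) (by omega) (by omega) (by omega) (by omega)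
  rw [show i - 1 - k - 1 = i - k - 1 - 1 by omega] at e1 e2
  rw [show i + 1 - k - 1 = i - k - 1 + 1 by omega] at e3 e4
  unfold turnp
  tauto

lemma CE_mid (hk : k ≤ n) (s : Finset (Fin n)) (hs : s.card = k)
    (τ : Equiv.Perm (Fin k)) (ρ : Equiv.Perm (Fin (n - k)))
    (hk1 : 1 ≤ k) (hkn : k + 1 ≤ n) :
    turnp (n+1) (buildPerm n k hk s hs τ ρ) (k + 1) := by
  left
  rw [show k + 1 - 1 = k by omega, E_mid hk s hs τ ρ,
    E_left hk s hs τ ρ k hk1 le_rfl, E_right hk s hs τ ρ (k+1+1) (by omega) (by omega)]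
  have u1 := (mLf s hs ((τ ⟨k - k, by omega⟩).rev)).isLt
  have u2 := (mRf s hs hk ((ρ ⟨k + 1 + 1 - k - 2, by omega⟩).rev)).isLt
  omega

theorem stat_eq (hn : 1 ≤ n) (hk : k ≤ n) (s : Finset (Fin n)) (hs : s.card = k)
    (τ : Equiv.Perm (Fin k)) (ρ : Equiv.Perm (Fin (n - k))) :
    altRunCount (n+1) (buildPerm n k hk s hs τ ρ) = udRunCount k τ + udRunCount (n - k) ρ := by
  have hAlt := altRunCount_eq (n+1) (buildPerm n k hk s hs τ ρ) (by omega)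
  rw [show n + 1 - 1 = n by omega] at hAlt
  rcases Nat.eq_zero_or_pos k with hk0 | hk1
  · -- k = 0
    subst hk0
    have hG := udRunCount_eq (n - 0) ρ (by omega)
    have hT : udRunCount 0 τ = 0 := rfl
    have hsh := card_filter_shift (turnp (n+1) (buildPerm n 0 hk s hs τ ρ)) (turnp (n - 0) ρ)
      2 n 1 (by omega) (by omega)
      (fun i hi1 hi2 => by
        have := CE_right hk s hs τ ρ i (by omega) hi2
        rwa [show i - 0 - 1 = i - 1 by omega] at this)
    rw [show (2 : ℕ) - 1 = 1 by omega] at hsh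
    rw [show n - 0 - 1 = n - 1 by omega] at hG
    omega
  rcases Nat.eq_or_lt_of_le hk with hkn | hkn
  · -- k = n
    subst hkn
    have hF := udRunCount_eq k τ (by omega)
    have hG : udRunCount (k - k) ρ = 0 := by
      unfold udRunCount
      rw [if_pos (by omega)]
    have hrefl := card_filter_reflect (turnp (k+1) (buildPerm k k hk s hs τ ρ)) (turnp k τ)
      2 k (k+1) (by omega) (by omega)
      (fun i hi1 hi2 => CE_left hk s hs τ ρ i hi1 hi2)
    rw [show k + 1 - k = 1 by omega, show k + 1 - 2 = k - 1 by omega] at hrefl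
    omega
  · -- 1 ≤ k < n
    have hF := udRunCount_eq k τ (by omega)
    have hG := udRunCount_eq (n - k) ρ (by omega)
    have s1 := card_filter_split (turnp (n+1) (buildPerm n k hk s hs τ ρ)) 2 k n
      (by omega) (by omega)
    have s2 := card_filter_split (turnp (n+1) (buildPerm n k hk s hs τ ρ)) (k+1) (k+1) n
      (by omega) (by omega)
    have hL := card_filter_reflect (turnp (n+1) (buildPerm n k hk s hs τ ρ)) (turnp k τ)
      2 k (k+1) (by omega) (by omega)
      (fun i hi1 hi2 => CE_left hk s hs τ ρ i hi1 hi2)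
    rw [show k + 1 - k = 1 by omega, show k + 1 - 2 = k - 1 by omega] at hL
    have hR := card_filter_shift (turnp (n+1) (buildPerm n k hk s hs τ ρ)) (turnp (n - k) ρ)
      (k+2) n (k+1) (by omega) (by omega)
      (fun i hi1 hi2 => by
        have := CE_right hk s hs τ ρ i hi1 hi2
        rwa [show i - k - 1 = i - (k+1) by omega] at this)
    rw [show k + 2 - (k+1) = 1 by omega, show n - (k+1) = n - k - 1 by omega] at hR
    rw [show n - k - 1 = n - k - 1 by omega] at hG
    have hMid : ((Finset.Icc (k+1) (k+1)).filter
        (turnp (n+1) (buildPerm n k hk s hs τ ρ))).card = 1 := by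
      rw [Finset.Icc_self, Finset.filter_singleton,
        if_pos (CE_mid hk s hs τ ρ hk1 (by omega))]
      exact Finset.card_singleton _
    have hs2' : k + 1 + 1 = k + 2 := by omega
    rw [hs2'] at s2
    omega

end Stat

section Bij

variable {n k : ℕ}

lemma bFun_left (hk : k ≤ n) (s : Finset (Fin n)) (hs : s.card = k)
    (τ : Equiv.Perm (Fin k)) (ρ : Equiv.Perm (Fin (n - k))) (p : Fin k) :
    bFun n k hk s hs τ ρ ⟨(p : ℕ), by omega⟩ = Fin.castSucc (mLf s hs ((τ p.rev).rev)) := by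
  unfold bFun
  rw [dif_pos (show ((⟨(p : ℕ), by omega⟩ : Fin (n+1)) : ℕ) < k from p.isLt)]

lemma bFun_right (hk : k ≤ n) (s : Finset (Fin n)) (hs : s.card = k)
    (τ : Equiv.Perm (Fin k)) (ρ : Equiv.Perm (Fin (n - k))) (x : Fin (n - k)) :
    bFun n k hk s hs τ ρ ⟨k + 1 + (x : ℕ), by have := x.isLt; omega⟩
      = Fin.castSucc (mRf s hs hk ((ρ x).rev)) := by
  unfold bFun
  rw [dif_neg (by show ¬(k + 1 + (x : ℕ) < k); omega),
    dif_neg (by show ¬(k + 1 + (x : ℕ) = k); omega)]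
  refine congrArg (fun z : Fin (n-k) => Fin.castSucc (mRf s hs hk ((ρ z).rev))) (Fin.ext ?_)
  show k + 1 + (x : ℕ) - k - 1 = (x : ℕ)
  omega

lemma bFun_max (hk : k ≤ n) (s : Finset (Fin n)) (hs : s.card = k)
    (τ : Equiv.Perm (Fin k)) (ρ : Equiv.Perm (Fin (n - k))) :
    bFun n k hk s hs τ ρ ⟨k, by omega⟩ = Fin.last n := by
  unfold bFun
  rw [dif_neg (by simp), dif_pos rfl]

lemma mem_iff_left (hk : k ≤ n) (s : Finset (Fin n)) (hs : s.card = k)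
    (τ : Equiv.Perm (Fin k)) (ρ : Equiv.Perm (Fin (n - k))) (v : Fin n) :
    v ∈ s ↔ ∃ q : Fin (n+1), (q : ℕ) < k ∧ bFun n k hk s hs τ ρ q = Fin.castSucc v := by
  constructor
  · intro hv
    set i := (s.orderIsoOfFin hs).symm ⟨v, hv⟩ with hidef
    set p := (τ.symm i.rev).rev with hpdef
    refine ⟨⟨(p : ℕ), by omega⟩, p.isLt, ?_⟩
    rw [bFun_left hk s hs τ ρ p]
    rw [hpdef, Fin.rev_rev, Equiv.apply_symm_apply, Fin.rev_rev]
    have : mLf s hs i = v := by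
      rw [hidef]
      unfold mLf
      rw [OrderIso.apply_symm_apply]
    rw [this]
  · rintro ⟨q, hq, he⟩
    unfold bFun at he
    rw [dif_pos hq] at he
    have := Fin.castSucc_injective n he
    rw [← this]
    exact mLf_mem s hs _

lemma buildPerm_inj (hk : k ≤ n) (s s' : Finset (Fin n)) (hs : s.card = k) (hs' : s'.card = k)
    (τ τ' : Equiv.Perm (Fin k)) (ρ ρ' : Equiv.Perm (Fin (n - k)))
    (h : buildPerm n k hk s hs τ ρ = buildPerm n k hk s' hs' τ' ρ') :
    s = s' ∧ τ = τ' ∧ ρ = ρ' := by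
  have hf : ∀ q, bFun n k hk s hs τ ρ q = bFun n k hk s' hs' τ' ρ' q := by
    intro q
    have : buildPerm n k hk s hs τ ρ q = buildPerm n k hk s' hs' τ' ρ' q := by rw [h]
    rwa [buildPerm_apply, buildPerm_apply] at this
  have hss : s = s' := by
    ext v
    rw [mem_iff_left hk s hs τ ρ v, mem_iff_left hk s' hs' τ' ρ' v]
    constructor <;> rintro ⟨q, hq, he⟩ <;> exact ⟨q, hq, by rw [← he, hf]⟩
  subst hss
  refine ⟨rfl, ?_, ?_⟩
  · apply Equiv.ext
    intro x
    have := hf ⟨((x.rev : Fin k) : ℕ), by omega⟩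
    rw [bFun_left hk s hs τ ρ x.rev, bFun_left hk s hs' τ' ρ' x.rev, Fin.rev_rev] at this
    have h2 := mLf_inj s hs (Fin.castSucc_injective n this)
    exact Fin.rev_injective h2
  · apply Equiv.ext
    intro x
    have := hf ⟨k + 1 + (x : ℕ), by have := x.isLt; omega⟩
    rw [bFun_right hk s hs τ ρ x, bFun_right hk s hs' τ' ρ' x] at this
    have h2 := mRf_inj s hs hk (Fin.castSucc_injective n this)
    exact Fin.rev_injective h2

end Bij





section FiberSum

variable {n : ℕ}

lemma card_fiber (n : ℕ) (y : Fin (n+1)) :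
    (Finset.univ.filter fun σ : Equiv.Perm (Fin (n+1)) => σ y = Fin.last n).card
      = n.factorial := by
  rw [← Fintype.card_subtype]
  have key : ∀ σ : Equiv.Perm (Fin (n+1)), σ 0 = (Equiv.Perm.decomposeFin σ).1 := by
    intro σ
    conv_lhs => rw [← Equiv.symm_apply_apply Equiv.Perm.decomposeFin σ]
    exact Equiv.Perm.decomposeFin_symm_apply_zero (Equiv.Perm.decomposeFin σ).1 (Equiv.Perm.decomposeFin σ).2
  have e1 : {σ : Equiv.Perm (Fin (n+1)) // σ y = Fin.last n}
      ≃ {σ : Equiv.Perm (Fin (n+1)) // σ 0 = Fin.last n} :=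
    { toFun := fun σh => ⟨σh.1 * Equiv.swap 0 y, by
        rw [Equiv.Perm.mul_apply, Equiv.swap_apply_left, σh.2]⟩
      invFun := fun σh => ⟨σh.1 * Equiv.swap 0 y, by
        rw [Equiv.Perm.mul_apply, Equiv.swap_apply_right, σh.2]⟩
      left_inv := fun σh => by
        ext1
        show σh.1 * Equiv.swap 0 y * Equiv.swap 0 y = σh.1
        rw [mul_assoc, Equiv.swap_mul_self, mul_one]
      right_inv := fun σh => by
        ext1
        show σh.1 * Equiv.swap 0 y * Equiv.swap 0 y = σh.1
        rw [mul_assoc, Equiv.swap_mul_self, mul_one] }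
  have e2 : {σ : Equiv.Perm (Fin (n+1)) // σ 0 = Fin.last n}
      ≃ {p : Fin (n+1) × Equiv.Perm (Fin n) // p.1 = Fin.last n} :=
    Equiv.subtypeEquiv Equiv.Perm.decomposeFin (fun σ => by rw [key σ])
  have e3 : {p : Fin (n+1) × Equiv.Perm (Fin n) // p.1 = Fin.last n}
      ≃ Equiv.Perm (Fin n) :=
    { toFun := fun p => p.1.2
      invFun := fun e => ⟨(Fin.last n, e), rfl⟩
      left_inv := by
        rintro ⟨⟨a, b⟩, h⟩
        simp only at h
        subst h
        rfl
      right_inv := fun e => rfl }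
  rw [Fintype.card_congr (e1.trans (e2.trans e3)), Fintype.card_perm, Fintype.card_fin]

/-- the map from triples to permutations -/
noncomputable def psiF (n k : ℕ) (hk : k ≤ n)
    (d : Finset (Fin n) × Equiv.Perm (Fin k) × Equiv.Perm (Fin (n - k))) :
    Equiv.Perm (Fin (n+1)) :=
  if hs : d.1.card = k then buildPerm n k hk d.1 hs d.2.1 d.2.2 else 1

lemma UDpoly_eq_sum (n : ℕ) :
    UDpoly n = ∑ σ : Equiv.Perm (Fin n), (Polynomial.X : Polynomial ℚ) ^ (udRunCount n σ) := by
  have hle : ∀ σ : Equiv.Perm (Fin n), udRunCount n σ ≤ n := by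
    intro σ
    unfold udRunCount
    split
    · omega
    · have := Finset.card_filter_le (Finset.Icc 1 (n-1)) (fun i =>
        (permEntry n σ (i - 1) < permEntry n σ i ∧ permEntry n σ (i + 1) < permEntry n σ i) ∨
        (permEntry n σ i < permEntry n σ (i - 1) ∧ permEntry n σ i < permEntry n σ (i + 1)))
      rw [Nat.card_Icc] at this
      omega
  rw [UDpoly, ← Finset.sum_fiberwise_of_maps_to (t := Finset.range (n+1)) (g := udRunCount n)
    (fun σ _ => by simp [Nat.lt_succ_iff, hle σ])
    (fun σ => (Polynomial.X : Polynomial ℚ) ^ (udRunCount n σ))]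
  refine Finset.sum_congr rfl fun k _ => ?_
  rw [Finset.sum_congr rfl (fun σ hσ => by rw [(Finset.mem_filter.mp hσ).2]),
    Finset.sum_const, udRunNum, nsmul_eq_mul]

lemma fiber_sum (hn : 1 ≤ n) (y : Fin (n+1)) :
    ∑ σ ∈ (Finset.univ.filter fun σ : Equiv.Perm (Fin (n+1)) => σ y = Fin.last n),
        (Polynomial.X : Polynomial ℚ) ^ (altRunCount (n+1) σ)
      = (n.choose (y : ℕ) : Polynomial ℚ) * UDpoly (y : ℕ) * UDpoly (n - (y : ℕ)) := by
  set k := (y : ℕ) with hky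
  have hk : k ≤ n := by omega
  set D := (Finset.powersetCard k (Finset.univ : Finset (Fin n))) ×ˢ
      ((Finset.univ : Finset (Equiv.Perm (Fin k))) ×ˢ
       (Finset.univ : Finset (Equiv.Perm (Fin (n - k))))) with hD
  have hmem : ∀ d ∈ D, d.1.card = k := by
    intro d hd
    rw [hD, Finset.mem_product] at hd
    exact (Finset.mem_powersetCard.mp hd.1).2
  have hinj : ∀ d ∈ D, ∀ d' ∈ D, psiF n k hk d = psiF n k hk d' → d = d' := by
    intro d hd d' hd' he
    rw [psiF, psiF, dif_pos (hmem d hd), dif_pos (hmem d' hd')] at he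
    obtain ⟨h1, h2, h3⟩ := buildPerm_inj hk d.1 d'.1 (hmem d hd) (hmem d' hd') d.2.1 d'.2.1
      d.2.2 d'.2.2 he
    exact Prod.ext h1 (Prod.ext h2 h3)
  have hmaps : ∀ d ∈ D, psiF n k hk d ∈
      (Finset.univ.filter fun σ : Equiv.Perm (Fin (n+1)) => σ y = Fin.last n) := by
    intro d hd
    rw [Finset.mem_filter]
    refine ⟨Finset.mem_univ _, ?_⟩
    rw [psiF, dif_pos (hmem d hd)]
    have : y = (⟨k, by omega⟩ : Fin (n+1)) := Fin.ext rfl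
    rw [this, buildPerm_apply]
    exact bFun_max hk d.1 (hmem d hd) d.2.1 d.2.2
  have hcard : D.card = n.factorial := by
    rw [hD, Finset.card_product, Finset.card_product, Finset.card_powersetCard,
      Finset.card_univ, Finset.card_univ, Finset.card_univ, Fintype.card_fin,
      Fintype.card_perm, Fintype.card_perm, Fintype.card_fin, Fintype.card_fin,
      ← Nat.choose_mul_factorial_mul_factorial hk, mul_assoc]
  have himg : D.image (psiF n k hk)
      = (Finset.univ.filter fun σ : Equiv.Perm (Fin (n+1)) => σ y = Fin.last n) := by
    apply Finset.eq_of_subset_of_card_le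
    · intro x hx
      obtain ⟨d, hd, rfl⟩ := Finset.mem_image.mp hx
      exact hmaps d hd
    · rw [card_fiber n y, Finset.card_image_of_injOn (fun d hd d' hd' => hinj d hd d' hd'),
        hcard]
  rw [← himg, Finset.sum_image hinj]
  have hstat : ∀ d ∈ D, (Polynomial.X : Polynomial ℚ) ^ (altRunCount (n+1) (psiF n k hk d))
      = Polynomial.X ^ (udRunCount k d.2.1) * Polynomial.X ^ (udRunCount (n-k) d.2.2) := by
    intro d hd
    rw [psiF, dif_pos (hmem d hd), stat_eq hn hk d.1 (hmem d hd) d.2.1 d.2.2, pow_add]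
  rw [Finset.sum_congr rfl hstat]
  rw [hD, Finset.sum_product]
  have hinner : ∀ x : Finset (Fin n),
      (∑ p ∈ (Finset.univ : Finset (Equiv.Perm (Fin k))) ×ˢ
          (Finset.univ : Finset (Equiv.Perm (Fin (n-k)))),
        (Polynomial.X : Polynomial ℚ) ^ udRunCount k (x, p).2.1
          * Polynomial.X ^ udRunCount (n - k) (x, p).2.2)
      = UDpoly k * UDpoly (n - k) := by
    intro x
    rw [Finset.sum_product, UDpoly_eq_sum, UDpoly_eq_sum, Finset.sum_mul_sum]
  rw [Finset.sum_congr rfl (fun x _ => hinner x), Finset.sum_const, Finset.card_powersetCard,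
    Finset.card_univ, Fintype.card_fin, nsmul_eq_mul, mul_assoc]

end FiberSum

lemma Rpoly_eq_sum (n : ℕ) (hn : n ≠ 0) :
    Rpoly n = ∑ σ : Equiv.Perm (Fin (n+1)), (Polynomial.X : Polynomial ℚ) ^ (altRunCount (n+1) σ) := by
  have hb : ∀ σ : Equiv.Perm (Fin (n+1)), 1 ≤ altRunCount (n+1) σ ∧ altRunCount (n+1) σ ≤ n := by
    intro σ
    rw [altRunCount_eq (n+1) σ (by omega)]
    have := Finset.card_filter_le (Finset.Icc 2 (n+1-1)) (turnp (n+1) σ)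
    rw [Nat.card_Icc] at this
    omega
  rw [Rpoly, if_neg hn,
    ← Finset.sum_fiberwise_of_maps_to (t := Finset.Icc 1 n) (g := altRunCount (n+1))
    (fun σ _ => by
      have := hb σ
      simp only [Finset.mem_Icc]
      omega)
    (fun σ => (Polynomial.X : Polynomial ℚ) ^ (altRunCount (n+1) σ))]
  refine Finset.sum_congr rfl fun k _ => ?_
  rw [Finset.sum_congr rfl (fun σ hσ => by rw [(Finset.mem_filter.mp hσ).2]),
    Finset.sum_const, altRunNum, nsmul_eq_mul]

theorem part1 (n : ℕ) : Rpoly n = ∑ k ∈ Finset.range (n + 1),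
    (n.choose k : Polynomial ℚ) * UDpoly k * UDpoly (n - k) := by
  rcases Nat.eq_zero_or_pos n with h0 | h1
  · subst h0
    rw [Rpoly, if_pos rfl, Finset.sum_range_one]
    have hUD0 : UDpoly 0 = 1 := by
      rw [UDpoly, Finset.sum_range_one]
      have h1 : udRunNum 0 0 = 1 := by
        have he : (Finset.univ.filter fun σ : Equiv.Perm (Fin 0) => udRunCount 0 σ = 0)
            = Finset.univ := Finset.filter_true_of_mem (fun σ _ => rfl)
        rw [udRunNum, he, Finset.card_univ, Fintype.card_perm, Fintype.card_fin]
        rfl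
      rw [h1]
      simp
    rw [hUD0]
    simp
  · rw [Rpoly_eq_sum n (by omega),
      ← Finset.sum_fiberwise_of_maps_to (t := (Finset.univ : Finset (Fin (n+1))))
        (g := fun σ : Equiv.Perm (Fin (n+1)) => σ.symm (Fin.last n)) (fun σ _ => Finset.mem_univ _)
        (fun σ => (Polynomial.X : Polynomial ℚ) ^ altRunCount (n+1) σ),
      ← Fin.sum_univ_eq_sum_range (fun m => (n.choose m : Polynomial ℚ) * UDpoly m * UDpoly (n - m)) (n+1)]
    refine Finset.sum_congr rfl fun y _ => ?_
    have hfe : Finset.univ.filter (fun σ : Equiv.Perm (Fin (n+1)) => σ.symm (Fin.last n) = y)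
        = Finset.univ.filter (fun σ : Equiv.Perm (Fin (n+1)) => σ y = Fin.last n) := by
      apply Finset.filter_congr
      intro σ _
      rw [Equiv.symm_apply_eq]
      exact eq_comm
    rw [hfe, fiber_sum h1 y]


end Aux14

/-- `R_n(x) = Σ_{k=0}^{n} C(n,k)·Λ_k(x)·Λ_{n−k}(x)`; equivalently the EGF of
the `R_n` is the square of the EGF of the `Λ_n`. -/
theorem stmt_14 :
    (∀ n : ℕ, Rpoly n = ∑ k ∈ Finset.range (n + 1),
        (n.choose k : Polynomial ℚ) * UDpoly k * UDpoly (n - k)) ∧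
      (PowerSeries.mk fun n => ((n.factorial : ℚ))⁻¹ • Rpoly n)
        = (PowerSeries.mk fun n => ((n.factorial : ℚ))⁻¹ • UDpoly n) ^ 2 := by
  refine ⟨part1, ?_⟩
  apply PowerSeries.ext; intro n
  rw [sq, PowerSeries.coeff_mul, Finset.Nat.sum_antidiagonal_eq_sum_range_succ_mk]
  simp only [PowerSeries.coeff_mk]
  rw [part1 n, Finset.smul_sum]
  refine Finset.sum_congr rfl fun k hk => ?_
  have hkn : k ≤ n := Nat.lt_succ_iff.mp (Finset.mem_range.mp hk)
  have hfact : (n.choose k : ℚ) * ((k.factorial : ℚ) * ((n-k).factorial : ℚ)) = (n.factorial : ℚ) := by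
    rw_mod_cast [← Nat.choose_mul_factorial_mul_factorial hkn]; ring
  have hk0 : (k.factorial : ℚ) ≠ 0 := Nat.cast_ne_zero.mpr (Nat.factorial_ne_zero k)
  have hnk0 : ((n-k).factorial : ℚ) ≠ 0 := Nat.cast_ne_zero.mpr (Nat.factorial_ne_zero _)
  have hn0 : (n.factorial : ℚ) ≠ 0 := Nat.cast_ne_zero.mpr (Nat.factorial_ne_zero _)
  simp only [Polynomial.smul_eq_C_mul, ← Polynomial.C_eq_natCast]
  have key : ((n.factorial : ℚ))⁻¹ * (n.choose k : ℚ)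
      = ((k.factorial : ℚ))⁻¹ * (((n-k).factorial : ℚ))⁻¹ := by
    field_simp
    linarith [hfact]
  calc Polynomial.C ((n.factorial : ℚ))⁻¹ * (Polynomial.C (n.choose k : ℚ) * UDpoly k * UDpoly (n - k))
      = Polynomial.C (((n.factorial : ℚ))⁻¹ * (n.choose k : ℚ)) * UDpoly k * UDpoly (n - k) := by
        rw [map_mul]; ring
    _ = Polynomial.C (((k.factorial : ℚ))⁻¹ * (((n-k).factorial : ℚ))⁻¹) * UDpoly k * UDpoly (n - k) := by rw [key]
    _ = Polynomial.C ((k.factorial : ℚ))⁻¹ * UDpoly k * (Polynomial.C (((n-k).factorial : ℚ))⁻¹ * UDpoly (n - k)) := by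
        rw [map_mul]; ring
end

section
/- For every n ≥ 1, the following polynomial identity holds in ℚ[x]: 2^{n−1}·Λ_n(x) = x·Σ_{k=0}^{⌊(n−1)/2⌋} M(n,k)·(2x)^k·(1+x)^{n−1−k}. (This is the denominator-free form of the relation Λ_n(x) = x·(1+x)^{n−1}/2^{n−1} · M_n(2x/(1+x)).) -/
open Finset Polynomial

lemma permEntry_pos {n : ℕ} (σ : Equiv.Perm (Fin n)) {i : ℕ} (h1 : 1 ≤ i) (h2 : i ≤ n) :
    1 ≤ permEntry n σ i := by
  unfold permEntry; rw [dif_pos ⟨h1, h2⟩]; omega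

lemma permEntry_le {n : ℕ} (σ : Equiv.Perm (Fin n)) (i : ℕ) : permEntry n σ i ≤ n := by
  unfold permEntry
  split
  · have := (σ ⟨i - 1, by omega⟩).isLt; omega
  · omega

lemma permEntry_zero {n : ℕ} (σ : Equiv.Perm (Fin n)) : permEntry n σ 0 = 0 := by
  unfold permEntry; rw [dif_neg]; omega

lemma permEntry_of_gt {n : ℕ} (σ : Equiv.Perm (Fin n)) {i : ℕ} (h : n < i) :
    permEntry n σ i = 0 := by
  unfold permEntry; rw [dif_neg]; omega

lemma permEntry_ne {n : ℕ} (σ : Equiv.Perm (Fin n)) {i j : ℕ} (h1 : 1 ≤ i) (h2 : i ≤ n)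
    (h3 : 1 ≤ j) (h4 : j ≤ n) (hij : i ≠ j) : permEntry n σ i ≠ permEntry n σ j := by
  unfold permEntry
  rw [dif_pos ⟨h1, h2⟩, dif_pos ⟨h3, h4⟩]
  intro h
  have : σ ⟨i - 1, by omega⟩ = σ ⟨j - 1, by omega⟩ := by
    apply Fin.ext; omega
  have := σ.injective this
  have : i - 1 = j - 1 := congrArg Fin.val this
  omega

/-- insert the new maximum at (0-based) position `p`. -/
def insMax {n : ℕ} (τ : Equiv.Perm (Fin n)) (p : Fin (n + 1)) : Equiv.Perm (Fin (n + 1)) :=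
  ((finSuccEquiv' p).trans (Equiv.optionCongr τ)).trans finSuccEquivLast.symm

lemma insMax_apply_self {n : ℕ} (τ : Equiv.Perm (Fin n)) (p : Fin (n + 1)) :
    insMax τ p p = Fin.last n := by
  simp [insMax, finSuccEquivLast]

lemma insMax_apply_succAbove {n : ℕ} (τ : Equiv.Perm (Fin n)) (p : Fin (n + 1)) (k : Fin n) :
    insMax τ p (p.succAbove k) = (τ k).castSucc := by
  simp [insMax, finSuccEquivLast]

lemma insMax_injective {n : ℕ} :
    Function.Injective (fun q : Equiv.Perm (Fin n) × Fin (n + 1) => insMax q.1 q.2) := by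
  rintro ⟨τ, p⟩ ⟨τ', p'⟩ h
  simp only at h
  have hp : p = p' := by
    have h1 : insMax τ p p = Fin.last n := insMax_apply_self τ p
    rw [h] at h1
    by_contra hne
    obtain ⟨k, hk⟩ := Fin.exists_succAbove_eq hne
    have h2 := insMax_apply_succAbove τ' p' k
    rw [hk] at h2
    rw [h2] at h1
    exact absurd (congrArg Fin.val h1) (by have := (τ' k).isLt; simp [Fin.last]; omega)
  subst hp
  have hτ : τ = τ' := by
    apply Equiv.ext; intro k
    have := DFunLike.congr_fun h (p.succAbove k)
    rw [insMax_apply_succAbove, insMax_apply_succAbove] at this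
    exact Fin.castSucc_injective n this
  rw [hτ]

/-- the insertion equivalence -/
noncomputable def insEquiv (n : ℕ) : Equiv.Perm (Fin n) × Fin (n + 1) ≃ Equiv.Perm (Fin (n + 1)) :=
  Equiv.ofBijective _ ((Fintype.bijective_iff_injective_and_card
    (fun q : Equiv.Perm (Fin n) × Fin (n + 1) => insMax q.1 q.2)).mpr
    ⟨insMax_injective, by simp [Fintype.card_perm, Nat.factorial_succ, Nat.mul_comm]⟩)

lemma insEquiv_apply {n : ℕ} (τ : Equiv.Perm (Fin n)) (p : Fin (n + 1)) :
    insEquiv n (τ, p) = insMax τ p := rfl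

/-- entry lemmas -/
lemma permEntry_insMax_low {n : ℕ} (τ : Equiv.Perm (Fin n)) (p : Fin (n + 1)) {i : ℕ}
    (h2 : i ≤ (p : ℕ)) : permEntry (n + 1) (insMax τ p) i = permEntry n τ i := by
  rcases Nat.eq_zero_or_pos i with rfl | h1
  · rw [permEntry_zero, permEntry_zero]
  have hin : i ≤ n := by have := p.isLt; omega
  have hlt : i - 1 < n := by omega
  unfold permEntry
  rw [dif_pos ⟨h1, by omega⟩, dif_pos ⟨h1, hin⟩]
  have hs : (⟨i - 1, by omega⟩ : Fin (n + 1)) = p.succAbove ⟨i - 1, hlt⟩ := by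
    rw [Fin.succAbove_of_castSucc_lt]
    · rfl
    · simp [Fin.lt_def]; omega
  rw [hs, insMax_apply_succAbove]
  rfl

lemma permEntry_insMax_self {n : ℕ} (τ : Equiv.Perm (Fin n)) (p : Fin (n + 1)) :
    permEntry (n + 1) (insMax τ p) ((p : ℕ) + 1) = n + 1 := by
  unfold permEntry
  rw [dif_pos ⟨by omega, by have := p.isLt; omega⟩]
  have : (⟨(p : ℕ) + 1 - 1, by have := p.isLt; omega⟩ : Fin (n + 1)) = p := by
    apply Fin.ext; simp
  rw [this, insMax_apply_self]
  simp [Fin.last]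

lemma permEntry_insMax_high {n : ℕ} (τ : Equiv.Perm (Fin n)) (p : Fin (n + 1)) {i : ℕ}
    (h1 : (p : ℕ) + 2 ≤ i) (h2 : i ≤ n + 1) :
    permEntry (n + 1) (insMax τ p) i = permEntry n τ (i - 1) := by
  unfold permEntry
  rw [dif_pos ⟨by omega, h2⟩, dif_pos ⟨by omega, by omega⟩]
  have hlt : i - 2 < n := by omega
  have hs : (⟨i - 1, by omega⟩ : Fin (n + 1)) = p.succAbove ⟨i - 2, hlt⟩ := by
    rw [Fin.succAbove_of_le_castSucc]
    · apply Fin.ext; simp; omega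
    · simp [Fin.le_def]; omega
  rw [hs, insMax_apply_succAbove]
  have : i - 1 - 1 = i - 2 := by omega
  simp [this]
-- change indicator: bound m = (length - 1)
def cind (m : ℕ) (E : ℕ → ℕ) (i : ℕ) : ℕ :=
  if i ≤ m ∧ ((E (i-1) < E i ∧ E (i+1) < E i) ∨ (E i < E (i-1) ∧ E i < E (i+1))) then 1 else 0

-- peak indicator over [2, m]
def pind (m : ℕ) (E : ℕ → ℕ) (i : ℕ) : ℕ :=
  if 2 ≤ i ∧ i ≤ m ∧ (E (i-1) < E i ∧ E (i+1) < E i) then 1 else 0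

lemma cind_zero (m : ℕ) (E : ℕ → ℕ) : cind m E 0 = 0 := by
  unfold cind
  rw [if_neg]
  rintro ⟨-, (⟨h1, -⟩ | ⟨h1, -⟩)⟩ <;> simp at h1

lemma cind_eq {m i : ℕ} (E : ℕ → ℕ) (h : i ≤ m) :
    cind m E i
      = if (E (i-1) < E i ∧ E (i+1) < E i) ∨ (E i < E (i-1) ∧ E i < E (i+1)) then 1 else 0 := by
  unfold cind; exact if_congr (and_iff_right h) rfl rfl

lemma cind_oob {m i : ℕ} (E : ℕ → ℕ) (h : m < i) : cind m E i = 0 := by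
  unfold cind; exact if_neg (by omega)

lemma pind_eq {m i : ℕ} (E : ℕ → ℕ) (h2 : 2 ≤ i) (h : i ≤ m) :
    pind m E i = if E (i-1) < E i ∧ E (i+1) < E i then 1 else 0 := by
  unfold pind; exact if_congr ⟨fun h => h.2.2, fun hq => ⟨h2, h, hq⟩⟩ rfl rfl

lemma pind_oob {m i : ℕ} (E : ℕ → ℕ) (h : i < 2 ∨ m < i) : pind m E i = 0 := by
  unfold pind; exact if_neg (by omega)

lemma udRun_eq_sum {m : ℕ} (hm : 1 ≤ m) (σ : Equiv.Perm (Fin m)) (K : ℕ) (hK : m + 1 ≤ K) :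
    udRunCount m σ = 1 + ∑ i ∈ Finset.Ico 0 K, cind (m - 1) (permEntry m σ) i := by
  have h1 : ∑ i ∈ Finset.Ico 0 K, cind (m-1) (permEntry m σ) i
      = ∑ i ∈ Finset.Icc 1 (m-1), cind (m-1) (permEntry m σ) i := by
    rw [eq_comm]
    apply Finset.sum_subset
    · intro i hi
      rw [Finset.mem_Icc] at hi; rw [Finset.mem_Ico]; omega
    · intro i hi hni
      rw [Finset.mem_Icc] at hni
      rcases Nat.eq_zero_or_pos i with rfl | h1
      · exact cind_zero _ _
      · exact cind_oob _ (by omega)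
  rw [h1, udRunCount, if_neg (by omega), Finset.card_filter]
  congr 1
  apply Finset.sum_congr rfl
  intro i hi
  rw [Finset.mem_Icc] at hi
  rw [cind_eq _ hi.2]

lemma ipk_eq_sum {m : ℕ} (σ : Equiv.Perm (Fin m)) (K : ℕ) (hK : m ≤ K) :
    intPeakCount m σ = ∑ i ∈ Finset.Ico 0 K, pind (m - 1) (permEntry m σ) i := by
  have h1 : ∑ i ∈ Finset.Ico 0 K, pind (m-1) (permEntry m σ) i
      = ∑ i ∈ Finset.Icc 2 (m-1), pind (m-1) (permEntry m σ) i := by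
    rw [eq_comm]
    apply Finset.sum_subset
    · intro i hi
      rw [Finset.mem_Icc] at hi; rw [Finset.mem_Ico]; omega
    · intro i hi hni
      rw [Finset.mem_Icc] at hni
      exact pind_oob _ (by omega)
  rw [h1, intPeakCount, Finset.card_filter]
  apply Finset.sum_congr rfl
  intro i hi
  rw [Finset.mem_Icc] at hi
  rw [pind_eq _ hi.1 hi.2]

/-- change in up-down run count when inserting max at 0-based slot `P`. -/
def deltaU (n : ℕ) (τ : Equiv.Perm (Fin n)) (P : ℕ) : ℕ :=
  if P = n then (if permEntry n τ (n-1) < permEntry n τ n then 0 else 1)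
  else if permEntry n τ P < permEntry n τ (P+1) then
    (if P + 1 = n then 1 else if permEntry n τ (P+2) < permEntry n τ (P+1) then 0 else 2)
  else if permEntry n τ (P-1) < permEntry n τ P then 0 else 2

/-- change in interior peak count when inserting max at 0-based slot `P`. -/
def deltaP (n : ℕ) (τ : Equiv.Perm (Fin n)) (P : ℕ) : ℕ :=
  if P = 0 ∨ P = n then 0
  else if (2 ≤ P ∧ permEntry n τ (P-1) < permEntry n τ P ∧ permEntry n τ (P+1) < permEntry n τ P) ∨
      (P + 1 ≤ n - 1 ∧ permEntry n τ P < permEntry n τ (P+1) ∧ permEntry n τ (P+2) < permEntry n τ (P+1))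
    then 0 else 1

set_option maxHeartbeats 4000000 in
/-- the pure-arithmetic mid-window identity for up-down runs -/
lemma midU (P n a b c d e f : ℕ) (hP : P ≤ n) (hn : 1 ≤ n)
    (fa : a ≤ n) (fb : b ≤ n) (fc : c ≤ n) (fd : d ≤ n)
    (f1 : P = 0 → a = 0 ∧ b = 0)
    (f2 : 1 ≤ P → 1 ≤ b ∧ a ≠ b)
    (f3 : P + 1 ≤ n → 1 ≤ c ∧ b ≠ c)
    (f4 : P + 2 ≤ n → 1 ≤ d ∧ c ≠ d)
    (f5 : P = n → c = 0)
    (f6 : P + 1 = n → d = 0)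
    (hef : P = n → e = a ∧ f = b) :
    (if P ≤ n ∧ ((a < b ∧ n + 1 < b) ∨ (b < a ∧ b < n + 1)) then 1 else 0)
      + (if P + 1 ≤ n ∧ ((b < n + 1 ∧ c < n + 1) ∨ (n + 1 < b ∧ n + 1 < c)) then 1 else 0)
      + (if P + 2 ≤ n ∧ ((n + 1 < c ∧ d < c) ∨ (c < n + 1 ∧ c < d)) then 1 else 0)
    = (if P ≤ n - 1 ∧ ((a < b ∧ c < b) ∨ (b < a ∧ b < c)) then 1 else 0)
      + (if P + 1 ≤ n - 1 ∧ ((b < c ∧ d < c) ∨ (c < b ∧ c < d)) then 1 else 0)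
      + (if P = n then (if e < f then 0 else 1)
         else if b < c then (if P + 1 = n then 1 else if d < c then 0 else 2)
         else if a < b then 0 else 2) := by
  split_ifs <;> omega

set_option maxHeartbeats 2000000 in
/-- the pure-arithmetic mid-window identity for interior peaks -/
lemma midP (P n a b c d : ℕ) (hP : P ≤ n) (hn : 1 ≤ n)
    (fa : a ≤ n) (fb : b ≤ n) (fc : c ≤ n) (fd : d ≤ n)
    (f1 : P = 0 → a = 0 ∧ b = 0)
    (f2 : 1 ≤ P → 1 ≤ b ∧ a ≠ b)
    (f3 : P + 1 ≤ n → 1 ≤ c ∧ b ≠ c)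
    (f4 : P + 2 ≤ n → 1 ≤ d ∧ c ≠ d)
    (f5 : P = n → c = 0)
    (f6 : P + 1 = n → d = 0) :
    (if 2 ≤ P ∧ P ≤ n ∧ (a < b ∧ n + 1 < b) then 1 else 0)
      + (if 2 ≤ P + 1 ∧ P + 1 ≤ n ∧ (b < n + 1 ∧ c < n + 1) then 1 else 0)
      + (if 2 ≤ P + 2 ∧ P + 2 ≤ n ∧ (n + 1 < c ∧ d < c) then 1 else 0)
    = (if 2 ≤ P ∧ P ≤ n - 1 ∧ (a < b ∧ c < b) then 1 else 0)
      + (if 2 ≤ P + 1 ∧ P + 1 ≤ n - 1 ∧ (b < c ∧ d < c) then 1 else 0)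
      + (if P = 0 ∨ P = n then 0
         else if (2 ≤ P ∧ a < b ∧ c < b) ∨ (P + 1 ≤ n - 1 ∧ b < c ∧ d < c) then 0 else 1) := by
  split_ifs <;> omega
lemma sum_split3 {M : Type*} [AddCommMonoid M] (f : ℕ → M) (P K : ℕ) (h : P + 3 ≤ K) :
    ∑ i ∈ Finset.Ico 0 K, f i
      = (∑ i ∈ Finset.Ico 0 P, f i) + (f P + f (P+1) + f (P+2))
        + ∑ i ∈ Finset.Ico (P+3) K, f i := by
  have e1 := Finset.sum_Ico_consecutive f (Nat.zero_le P) (by omega : P ≤ P+3)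
  have e2 := Finset.sum_Ico_consecutive f (Nat.zero_le (P+3)) h
  have e3 : ∑ i ∈ Finset.Ico P (P+3), f i = f P + f (P+1) + f (P+2) := by
    rw [Finset.sum_Ico_eq_sum_range, show P+3-P = 3 by omega]
    rw [Finset.sum_range_succ, Finset.sum_range_succ, Finset.sum_range_one, Nat.add_zero]
  rw [← e2, ← e1, e3]

lemma sum_split2 {M : Type*} [AddCommMonoid M] (f : ℕ → M) (P K : ℕ) (h : P + 2 ≤ K) :
    ∑ i ∈ Finset.Ico 0 K, f i
      = (∑ i ∈ Finset.Ico 0 P, f i) + (f P + f (P+1))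
        + ∑ i ∈ Finset.Ico (P+2) K, f i := by
  have e1 := Finset.sum_Ico_consecutive f (Nat.zero_le P) (by omega : P ≤ P+2)
  have e2 := Finset.sum_Ico_consecutive f (Nat.zero_le (P+2)) h
  have e3 : ∑ i ∈ Finset.Ico P (P+2), f i = f P + f (P+1) := by
    rw [Finset.sum_Ico_eq_sum_range, show P+2-P = 2 by omega]
    rw [Finset.sum_range_succ, Finset.sum_range_one, Nat.add_zero]
  rw [← e2, ← e1, e3]

section Insertion

variable {n : ℕ} (τ : Equiv.Perm (Fin n)) (p : Fin (n + 1))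

lemma low_cind (hn : 1 ≤ n) {i : ℕ} (hi : i < (p : ℕ)) :
    cind n (permEntry (n+1) (insMax τ p)) i = cind (n-1) (permEntry n τ) i := by
  have hP := p.isLt
  rcases Nat.eq_zero_or_pos i with rfl | h1
  · rw [cind_zero, cind_zero]
  · rw [cind_eq _ (by omega : i ≤ n), cind_eq _ (by omega : i ≤ n - 1)]
    rw [permEntry_insMax_low τ p (by omega : i - 1 ≤ (p:ℕ)),
        permEntry_insMax_low τ p (by omega : i ≤ (p:ℕ)),
        permEntry_insMax_low τ p (by omega : i + 1 ≤ (p:ℕ))]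

lemma high_cind (hn : 1 ≤ n) {i : ℕ} (hi : (p : ℕ) + 3 ≤ i) (hi2 : i ≤ n + 2) :
    cind n (permEntry (n+1) (insMax τ p)) i = cind (n-1) (permEntry n τ) (i - 1) := by
  rcases Nat.lt_or_ge n i with h | h
  · rw [cind_oob _ (by omega : n < i), cind_oob _ (by omega : n - 1 < i - 1)]
  · rw [cind_eq _ h, cind_eq _ (by omega : i - 1 ≤ n - 1)]
    rw [permEntry_insMax_high τ p (by omega : (p:ℕ) + 2 ≤ i - 1) (by omega),
        permEntry_insMax_high τ p (by omega : (p:ℕ) + 2 ≤ i) (by omega),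
        permEntry_insMax_high τ p (by omega : (p:ℕ) + 2 ≤ i + 1) (by omega)]
    rw [show i - 1 - 1 = i - 2 by omega, show i + 1 - 1 = i by omega,
        show i - 1 + 1 = i by omega]

lemma low_pind (hn : 1 ≤ n) {i : ℕ} (hi : i < (p : ℕ)) :
    pind n (permEntry (n+1) (insMax τ p)) i = pind (n-1) (permEntry n τ) i := by
  have hP := p.isLt
  rcases Nat.lt_or_ge i 2 with h1 | h1
  · rw [pind_oob _ (Or.inl h1), pind_oob _ (Or.inl h1)]
  · rw [pind_eq _ h1 (by omega : i ≤ n), pind_eq _ h1 (by omega : i ≤ n - 1)]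
    rw [permEntry_insMax_low τ p (by omega : i - 1 ≤ (p:ℕ)),
        permEntry_insMax_low τ p (by omega : i ≤ (p:ℕ)),
        permEntry_insMax_low τ p (by omega : i + 1 ≤ (p:ℕ))]

lemma high_pind (hn : 1 ≤ n) {i : ℕ} (hi : (p : ℕ) + 3 ≤ i) (hi2 : i ≤ n + 2) :
    pind n (permEntry (n+1) (insMax τ p)) i = pind (n-1) (permEntry n τ) (i - 1) := by
  rcases Nat.lt_or_ge n i with h | h
  · rw [pind_oob _ (Or.inr (by omega : n < i)), pind_oob _ (Or.inr (by omega : n - 1 < i - 1))]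
  · rw [pind_eq _ (by omega) h, pind_eq _ (by omega : 2 ≤ i - 1) (by omega : i - 1 ≤ n - 1)]
    rw [permEntry_insMax_high τ p (by omega : (p:ℕ) + 2 ≤ i - 1) (by omega),
        permEntry_insMax_high τ p (by omega : (p:ℕ) + 2 ≤ i) (by omega),
        permEntry_insMax_high τ p (by omega : (p:ℕ) + 2 ≤ i + 1) (by omega)]
    rw [show i - 1 - 1 = i - 2 by omega, show i + 1 - 1 = i by omega,
        show i - 1 + 1 = i by omega]

/-- entries around the insertion slot -/
lemma mid_entries (hn : 1 ≤ n) :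
    permEntry (n+1) (insMax τ p) ((p:ℕ) - 1) = permEntry n τ ((p:ℕ) - 1)
    ∧ permEntry (n+1) (insMax τ p) (p:ℕ) = permEntry n τ (p:ℕ)
    ∧ permEntry (n+1) (insMax τ p) ((p:ℕ) + 1) = n + 1
    ∧ permEntry (n+1) (insMax τ p) ((p:ℕ) + 2) = permEntry n τ ((p:ℕ) + 1)
    ∧ permEntry (n+1) (insMax τ p) ((p:ℕ) + 3) = permEntry n τ ((p:ℕ) + 2) := by
  have hP := p.isLt
  refine ⟨permEntry_insMax_low τ p (by omega), permEntry_insMax_low τ p (by omega),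
    permEntry_insMax_self τ p, ?_, ?_⟩
  · rcases Nat.lt_or_ge (p:ℕ) n with h | h
    · rw [permEntry_insMax_high τ p (by omega) (by omega), show (p:ℕ)+2-1 = (p:ℕ)+1 from rfl]
    · rw [permEntry_of_gt _ (by omega), permEntry_of_gt _ (by omega)]
  · rcases Nat.lt_or_ge ((p:ℕ)+1) n with h | h
    · rw [permEntry_insMax_high τ p (by omega) (by omega), show (p:ℕ)+3-1 = (p:ℕ)+2 from rfl]
    · rw [permEntry_of_gt _ (by omega), permEntry_of_gt _ (by omega)]

lemma facts (hn : 1 ≤ n) :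
    (permEntry n τ ((p:ℕ)-1) ≤ n ∧ permEntry n τ (p:ℕ) ≤ n ∧ permEntry n τ ((p:ℕ)+1) ≤ n
      ∧ permEntry n τ ((p:ℕ)+2) ≤ n)
    ∧ ((p:ℕ) = 0 → permEntry n τ ((p:ℕ)-1) = 0 ∧ permEntry n τ (p:ℕ) = 0)
    ∧ (1 ≤ (p:ℕ) → 1 ≤ permEntry n τ (p:ℕ) ∧ permEntry n τ ((p:ℕ)-1) ≠ permEntry n τ (p:ℕ))
    ∧ ((p:ℕ) + 1 ≤ n → 1 ≤ permEntry n τ ((p:ℕ)+1) ∧ permEntry n τ (p:ℕ) ≠ permEntry n τ ((p:ℕ)+1))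
    ∧ ((p:ℕ) + 2 ≤ n → 1 ≤ permEntry n τ ((p:ℕ)+2) ∧ permEntry n τ ((p:ℕ)+1) ≠ permEntry n τ ((p:ℕ)+2))
    ∧ ((p:ℕ) = n → permEntry n τ ((p:ℕ)+1) = 0)
    ∧ ((p:ℕ) + 1 = n → permEntry n τ ((p:ℕ)+2) = 0) := by
  have hP := p.isLt
  refine ⟨⟨permEntry_le τ _, permEntry_le τ _, permEntry_le τ _, permEntry_le τ _⟩,
    ?_, ?_, ?_, ?_, ?_, ?_⟩
  · intro h0; rw [h0]; exact ⟨permEntry_zero τ, permEntry_zero τ⟩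
  · intro h1
    refine ⟨permEntry_pos τ h1 (by omega), ?_⟩
    rcases Nat.lt_or_ge (p:ℕ) 2 with h2 | h2
    · have : (p:ℕ) - 1 = 0 := by omega
      rw [this, permEntry_zero]
      have := permEntry_pos τ h1 (by omega); omega
    · exact permEntry_ne τ (by omega) (by omega) (by omega) (by omega) (by omega)
  · intro h1
    refine ⟨permEntry_pos τ (by omega) h1, ?_⟩
    rcases Nat.eq_zero_or_pos (p:ℕ) with h0 | h0
    · have e0 : permEntry n τ (p:ℕ) = 0 := by rw [h0]; exact permEntry_zero τ
      have := permEntry_pos τ (by omega : 1 ≤ (p:ℕ)+1) h1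
      omega
    · exact permEntry_ne τ (by omega) (by omega) (by omega) (by omega) (by omega)
  · intro h1
    exact ⟨permEntry_pos τ (by omega) h1,
      permEntry_ne τ (by omega) (by omega) (by omega) (by omega) (by omega)⟩
  · intro h1; exact permEntry_of_gt τ (by omega)
  · intro h1; exact permEntry_of_gt τ (by omega)

end Insertion
section InsertLemmas

variable {n : ℕ} (τ : Equiv.Perm (Fin n)) (p : Fin (n + 1))

lemma udRun_insMax (hn : 1 ≤ n) :
    udRunCount (n+1) (insMax τ p) = udRunCount n τ + deltaU n τ (p:ℕ) := by
  have hP : (p:ℕ) ≤ n := by have := p.isLt; omega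
  obtain ⟨me1, me2, me3, me4, me5⟩ := mid_entries τ p hn
  obtain ⟨⟨fa, fb, fc, fd⟩, f1, f2, f3, f4, f5, f6⟩ := facts τ p hn
  rw [udRun_eq_sum (by omega : 1 ≤ n+1) (insMax τ p) (n+3) (by omega),
      udRun_eq_sum hn τ (n+2) (by omega)]
  simp only [Nat.add_sub_cancel]
  rw [sum_split3 (cind n (permEntry (n+1) (insMax τ p))) (p:ℕ) (n+3) (by omega),
      sum_split2 (cind (n-1) (permEntry n τ)) (p:ℕ) (n+2) (by omega)]
  have hlow : ∑ i ∈ Finset.Ico 0 (p:ℕ), cind n (permEntry (n+1) (insMax τ p)) i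
      = ∑ i ∈ Finset.Ico 0 (p:ℕ), cind (n-1) (permEntry n τ) i := by
    apply Finset.sum_congr rfl
    intro i hi
    rw [Finset.mem_Ico] at hi
    exact low_cind τ p hn hi.2
  have hhigh : ∑ i ∈ Finset.Ico ((p:ℕ)+3) (n+3), cind n (permEntry (n+1) (insMax τ p)) i
      = ∑ i ∈ Finset.Ico ((p:ℕ)+2) (n+2), cind (n-1) (permEntry n τ) i := by
    rw [Finset.sum_Ico_eq_sum_range, Finset.sum_Ico_eq_sum_range,
        show n+3-((p:ℕ)+3) = n-(p:ℕ) by omega, show n+2-((p:ℕ)+2) = n-(p:ℕ) by omega]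
    apply Finset.sum_congr rfl
    intro j hj
    rw [Finset.mem_range] at hj
    rw [high_cind τ p hn (by omega : (p:ℕ)+3 ≤ (p:ℕ)+3+j) (by omega),
        show (p:ℕ)+3+j-1 = (p:ℕ)+2+j by omega]
  have hc0 : cind n (permEntry (n+1) (insMax τ p)) (p:ℕ)
      = if (p:ℕ) ≤ n ∧ ((permEntry n τ ((p:ℕ)-1) < permEntry n τ (p:ℕ) ∧ n+1 < permEntry n τ (p:ℕ))
          ∨ (permEntry n τ (p:ℕ) < permEntry n τ ((p:ℕ)-1) ∧ permEntry n τ (p:ℕ) < n+1)) then 1 else 0 := by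
    unfold cind; rw [me1, me2, me3]
  have hc1 : cind n (permEntry (n+1) (insMax τ p)) ((p:ℕ)+1)
      = if (p:ℕ)+1 ≤ n ∧ ((permEntry n τ (p:ℕ) < n+1 ∧ permEntry n τ ((p:ℕ)+1) < n+1)
          ∨ (n+1 < permEntry n τ (p:ℕ) ∧ n+1 < permEntry n τ ((p:ℕ)+1))) then 1 else 0 := by
    unfold cind
    rw [show (p:ℕ)+1-1 = (p:ℕ) from rfl, show (p:ℕ)+1+1 = (p:ℕ)+2 from rfl, me2, me3, me4]
  have hc2 : cind n (permEntry (n+1) (insMax τ p)) ((p:ℕ)+2)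
      = if (p:ℕ)+2 ≤ n ∧ ((n+1 < permEntry n τ ((p:ℕ)+1) ∧ permEntry n τ ((p:ℕ)+2) < permEntry n τ ((p:ℕ)+1))
          ∨ (permEntry n τ ((p:ℕ)+1) < n+1 ∧ permEntry n τ ((p:ℕ)+1) < permEntry n τ ((p:ℕ)+2))) then 1 else 0 := by
    unfold cind
    rw [show (p:ℕ)+2-1 = (p:ℕ)+1 from rfl, show (p:ℕ)+2+1 = (p:ℕ)+3 from rfl, me3, me4, me5]
  have ht0 : cind (n-1) (permEntry n τ) (p:ℕ)
      = if (p:ℕ) ≤ n-1 ∧ ((permEntry n τ ((p:ℕ)-1) < permEntry n τ (p:ℕ) ∧ permEntry n τ ((p:ℕ)+1) < permEntry n τ (p:ℕ))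
          ∨ (permEntry n τ (p:ℕ) < permEntry n τ ((p:ℕ)-1) ∧ permEntry n τ (p:ℕ) < permEntry n τ ((p:ℕ)+1))) then 1 else 0 := rfl
  have ht1 : cind (n-1) (permEntry n τ) ((p:ℕ)+1)
      = if (p:ℕ)+1 ≤ n-1 ∧ ((permEntry n τ (p:ℕ) < permEntry n τ ((p:ℕ)+1) ∧ permEntry n τ ((p:ℕ)+2) < permEntry n τ ((p:ℕ)+1))
          ∨ (permEntry n τ ((p:ℕ)+1) < permEntry n τ (p:ℕ) ∧ permEntry n τ ((p:ℕ)+1) < permEntry n τ ((p:ℕ)+2))) then 1 else 0 := rfl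
  have hd : deltaU n τ (p:ℕ)
      = if (p:ℕ) = n then (if permEntry n τ (n-1) < permEntry n τ n then 0 else 1)
        else if permEntry n τ (p:ℕ) < permEntry n τ ((p:ℕ)+1) then
          (if (p:ℕ)+1 = n then 1 else if permEntry n τ ((p:ℕ)+2) < permEntry n τ ((p:ℕ)+1) then 0 else 2)
        else if permEntry n τ ((p:ℕ)-1) < permEntry n τ (p:ℕ) then 0 else 2 := rfl
  have hmid := midU (p:ℕ) n (permEntry n τ ((p:ℕ)-1)) (permEntry n τ (p:ℕ))
    (permEntry n τ ((p:ℕ)+1)) (permEntry n τ ((p:ℕ)+2)) (permEntry n τ (n-1)) (permEntry n τ n)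
    hP hn fa fb fc fd f1 f2 f3 f4 f5 f6 (fun h => ⟨by rw [h], by rw [h]⟩)
  rw [hc0, hc1, hc2, ht0, ht1, hd] at *
  omega

lemma ipk_insMax (hn : 1 ≤ n) :
    intPeakCount (n+1) (insMax τ p) = intPeakCount n τ + deltaP n τ (p:ℕ) := by
  have hP : (p:ℕ) ≤ n := by have := p.isLt; omega
  obtain ⟨me1, me2, me3, me4, me5⟩ := mid_entries τ p hn
  obtain ⟨⟨fa, fb, fc, fd⟩, f1, f2, f3, f4, f5, f6⟩ := facts τ p hn
  rw [ipk_eq_sum (insMax τ p) (n+3) (by omega), ipk_eq_sum τ (n+2) (by omega)]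
  simp only [Nat.add_sub_cancel]
  rw [sum_split3 (pind n (permEntry (n+1) (insMax τ p))) (p:ℕ) (n+3) (by omega),
      sum_split2 (pind (n-1) (permEntry n τ)) (p:ℕ) (n+2) (by omega)]
  have hlow : ∑ i ∈ Finset.Ico 0 (p:ℕ), pind n (permEntry (n+1) (insMax τ p)) i
      = ∑ i ∈ Finset.Ico 0 (p:ℕ), pind (n-1) (permEntry n τ) i := by
    apply Finset.sum_congr rfl
    intro i hi
    rw [Finset.mem_Ico] at hi
    exact low_pind τ p hn hi.2
  have hhigh : ∑ i ∈ Finset.Ico ((p:ℕ)+3) (n+3), pind n (permEntry (n+1) (insMax τ p)) i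
      = ∑ i ∈ Finset.Ico ((p:ℕ)+2) (n+2), pind (n-1) (permEntry n τ) i := by
    rw [Finset.sum_Ico_eq_sum_range, Finset.sum_Ico_eq_sum_range,
        show n+3-((p:ℕ)+3) = n-(p:ℕ) by omega, show n+2-((p:ℕ)+2) = n-(p:ℕ) by omega]
    apply Finset.sum_congr rfl
    intro j hj
    rw [Finset.mem_range] at hj
    rw [high_pind τ p hn (by omega : (p:ℕ)+3 ≤ (p:ℕ)+3+j) (by omega),
        show (p:ℕ)+3+j-1 = (p:ℕ)+2+j by omega]
  have hc0 : pind n (permEntry (n+1) (insMax τ p)) (p:ℕ)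
      = if 2 ≤ (p:ℕ) ∧ (p:ℕ) ≤ n ∧ (permEntry n τ ((p:ℕ)-1) < permEntry n τ (p:ℕ) ∧ n+1 < permEntry n τ (p:ℕ)) then 1 else 0 := by
    unfold pind; rw [me1, me2, me3]
  have hc1 : pind n (permEntry (n+1) (insMax τ p)) ((p:ℕ)+1)
      = if 2 ≤ (p:ℕ)+1 ∧ (p:ℕ)+1 ≤ n ∧ (permEntry n τ (p:ℕ) < n+1 ∧ permEntry n τ ((p:ℕ)+1) < n+1) then 1 else 0 := by
    unfold pind
    rw [show (p:ℕ)+1-1 = (p:ℕ) from rfl, show (p:ℕ)+1+1 = (p:ℕ)+2 from rfl, me2, me3, me4]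
  have hc2 : pind n (permEntry (n+1) (insMax τ p)) ((p:ℕ)+2)
      = if 2 ≤ (p:ℕ)+2 ∧ (p:ℕ)+2 ≤ n ∧ (n+1 < permEntry n τ ((p:ℕ)+1) ∧ permEntry n τ ((p:ℕ)+2) < permEntry n τ ((p:ℕ)+1)) then 1 else 0 := by
    unfold pind
    rw [show (p:ℕ)+2-1 = (p:ℕ)+1 from rfl, show (p:ℕ)+2+1 = (p:ℕ)+3 from rfl, me3, me4, me5]
  have ht0 : pind (n-1) (permEntry n τ) (p:ℕ)
      = if 2 ≤ (p:ℕ) ∧ (p:ℕ) ≤ n-1 ∧ (permEntry n τ ((p:ℕ)-1) < permEntry n τ (p:ℕ) ∧ permEntry n τ ((p:ℕ)+1) < permEntry n τ (p:ℕ)) then 1 else 0 := rfl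
  have ht1 : pind (n-1) (permEntry n τ) ((p:ℕ)+1)
      = if 2 ≤ (p:ℕ)+1 ∧ (p:ℕ)+1 ≤ n-1 ∧ (permEntry n τ (p:ℕ) < permEntry n τ ((p:ℕ)+1) ∧ permEntry n τ ((p:ℕ)+2) < permEntry n τ ((p:ℕ)+1)) then 1 else 0 := rfl
  have hd : deltaP n τ (p:ℕ)
      = if (p:ℕ) = 0 ∨ (p:ℕ) = n then 0
        else if (2 ≤ (p:ℕ) ∧ permEntry n τ ((p:ℕ)-1) < permEntry n τ (p:ℕ) ∧ permEntry n τ ((p:ℕ)+1) < permEntry n τ (p:ℕ))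
            ∨ ((p:ℕ)+1 ≤ n-1 ∧ permEntry n τ (p:ℕ) < permEntry n τ ((p:ℕ)+1) ∧ permEntry n τ ((p:ℕ)+2) < permEntry n τ ((p:ℕ)+1))
          then 0 else 1 := rfl
  have hmid := midP (p:ℕ) n (permEntry n τ ((p:ℕ)-1)) (permEntry n τ (p:ℕ))
    (permEntry n τ ((p:ℕ)+1)) (permEntry n τ ((p:ℕ)+2))
    hP hn fa fb fc fd f1 f2 f3 f4 f5 f6
  rw [hc0, hc1, hc2, ht0, ht1, hd] at *
  omega

end InsertLemmas
section Counting

variable {n : ℕ} (τ : Equiv.Perm (Fin n))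

lemma telescope (hn : 1 ≤ n) (j : ℕ) (hj : j ≤ n - 1) :
    ((Finset.Icc 1 j).filter (fun i =>
        permEntry n τ (i-1) < permEntry n τ i ∧ permEntry n τ (i+1) < permEntry n τ i)).card
      + (if permEntry n τ (j+1) < permEntry n τ j then 0 else 1)
    = ((Finset.Icc 1 j).filter (fun i =>
        permEntry n τ i < permEntry n τ (i-1) ∧ permEntry n τ i < permEntry n τ (i+1))).card
      + 1 := by
  induction j with
  | zero =>
    rw [show (Finset.Icc 1 0) = ∅ from Finset.Icc_eq_empty (by omega)]
    rw [permEntry_zero τ]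
    simp
  | succ j ih =>
    have ih' := ih (by omega)
    have hp : ((Finset.Icc 1 (j+1)).filter (fun i =>
        permEntry n τ (i-1) < permEntry n τ i ∧ permEntry n τ (i+1) < permEntry n τ i)).card
        = ((Finset.Icc 1 j).filter (fun i =>
        permEntry n τ (i-1) < permEntry n τ i ∧ permEntry n τ (i+1) < permEntry n τ i)).card
          + (if permEntry n τ (j+1-1) < permEntry n τ (j+1) ∧ permEntry n τ (j+1+1) < permEntry n τ (j+1) then 1 else 0) := by
      rw [Finset.card_filter, Finset.card_filter, Finset.sum_Icc_succ_top (by omega : 1 ≤ j + 1)]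
    have hv : ((Finset.Icc 1 (j+1)).filter (fun i =>
        permEntry n τ i < permEntry n τ (i-1) ∧ permEntry n τ i < permEntry n τ (i+1))).card
        = ((Finset.Icc 1 j).filter (fun i =>
        permEntry n τ i < permEntry n τ (i-1) ∧ permEntry n τ i < permEntry n τ (i+1))).card
          + (if permEntry n τ (j+1) < permEntry n τ (j+1-1) ∧ permEntry n τ (j+1) < permEntry n τ (j+1+1) then 1 else 0) := by
      rw [Finset.card_filter, Finset.card_filter, Finset.sum_Icc_succ_top (by omega : 1 ≤ j + 1)]
    rw [hp, hv, show j+1-1 = j from rfl]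
    have hne1 : permEntry n τ j ≠ permEntry n τ (j+1) := by
      rcases Nat.eq_zero_or_pos j with rfl | h1
      · rw [permEntry_zero τ]
        have := permEntry_pos τ (by omega : 1 ≤ 0+1) (by omega)
        omega
      · exact permEntry_ne τ (by omega) (by omega) (by omega) (by omega) (by omega)
    have hne2 : permEntry n τ (j+1) ≠ permEntry n τ (j+1+1) := by
      exact permEntry_ne τ (by omega) (by omega) (by omega) (by omega) (by omega)
    split_ifs at * <;> omega

lemma udrun_eq (hn : 1 ≤ n) :
    udRunCount n τ
      = 2 * ((Finset.Icc 1 (n-1)).filter (fun i =>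
          permEntry n τ (i-1) < permEntry n τ i ∧ permEntry n τ (i+1) < permEntry n τ i)).card
        + (if permEntry n τ (n-1) < permEntry n τ n then 1 else 0) := by
  have tel := telescope τ hn (n-1) (le_refl _)
  rw [show n-1+1 = n by omega] at tel
  have hne : permEntry n τ (n-1) ≠ permEntry n τ n := by
    rcases Nat.lt_or_ge n 2 with h2 | h2
    · have h1 : n = 1 := by omega
      subst h1
      rw [show (1:ℕ)-1 = 0 from rfl, permEntry_zero τ]
      have := permEntry_pos τ (le_refl 1) (le_refl 1)
      omega
    · exact permEntry_ne τ (by omega) (by omega) (by omega) (by omega) (by omega)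
  have hsplit : udRunCount n τ
      = 1 + (((Finset.Icc 1 (n-1)).filter (fun i =>
          permEntry n τ (i-1) < permEntry n τ i ∧ permEntry n τ (i+1) < permEntry n τ i)).card
        + ((Finset.Icc 1 (n-1)).filter (fun i =>
          permEntry n τ i < permEntry n τ (i-1) ∧ permEntry n τ i < permEntry n τ (i+1))).card) := by
    rw [udRunCount, if_neg (by omega), Finset.card_filter, Finset.card_filter, Finset.card_filter,
      ← Finset.sum_add_distrib]
    congr 1
    apply Finset.sum_congr rfl
    intro i hi
    split_ifs <;> omega
  rw [hsplit]
  rcases Nat.lt_or_ge (permEntry n τ n) (permEntry n τ (n-1)) with h | h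
  · rw [if_pos h] at tel
    rw [if_neg (by omega)]
    omega
  · rw [if_neg (by omega)] at tel
    rw [if_pos (by omega)]
    omega

lemma udrun_pos (hn : 1 ≤ n) (σ : Equiv.Perm (Fin n)) : 1 ≤ udRunCount n σ := by
  rw [udRunCount, if_neg (by omega)]; omega

lemma udrun_le (hn : 1 ≤ n) (σ : Equiv.Perm (Fin n)) : udRunCount n σ ≤ n := by
  rw [udRunCount, if_neg (by omega)]
  have h1 := Finset.card_filter_le (Finset.Icc 1 (n-1)) (fun i =>
      (permEntry n σ (i-1) < permEntry n σ i ∧ permEntry n σ (i+1) < permEntry n σ i) ∨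
      (permEntry n σ i < permEntry n σ (i-1) ∧ permEntry n σ i < permEntry n σ (i+1)))
  have h2 : (Finset.Icc 1 (n-1)).card = n - 1 := by rw [Nat.card_Icc]; omega
  omega

lemma ipk_two_le (hn : 1 ≤ n) (σ : Equiv.Perm (Fin n)) :
    2 * intPeakCount n σ ≤ n - 1 := by
  have hb : intPeakCount n σ ≤ (n-1)/2 := by
    rw [intPeakCount]
    have hles := Finset.card_le_card_of_injOn (f := fun i => i / 2)
      (s := (Finset.Icc 2 (n - 1)).filter fun i =>
        permEntry n σ (i - 1) < permEntry n σ i ∧ permEntry n σ (i + 1) < permEntry n σ i)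
      (t := Finset.Icc 1 ((n-1)/2))
      ?_ ?_
    · rw [Nat.card_Icc] at hles; omega
    · intro i hi
      rw [Finset.mem_coe, Finset.mem_filter, Finset.mem_Icc] at hi
      rw [Finset.mem_coe, Finset.mem_Icc]
      exact ⟨(Nat.le_div_iff_mul_le (by norm_num)).mpr (by omega), Nat.div_le_div_right hi.1.2⟩
    · intro i hi j hj hij
      rw [Finset.mem_coe, Finset.mem_filter, Finset.mem_Icc] at hi hj
      simp only at hij
      by_contra hne
      have hadj : j = i + 1 ∨ i = j + 1 := by omega
      rcases hadj with h | h
      · subst h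
        have e1 := hi.2.2
        have e2 := hj.2.1
        rw [show i+1-1 = i from rfl] at e2
        omega
      · subst h
        have e1 := hj.2.2
        have e2 := hi.2.1
        rw [show j+1-1 = j from rfl] at e2
        omega
  omega

end Counting
section Cards

variable {n : ℕ} (τ : Equiv.Perm (Fin n))

lemma facts' (hn : 1 ≤ n) (P : ℕ) (hP : P ≤ n) :
    (permEntry n τ (P-1) ≤ n ∧ permEntry n τ P ≤ n ∧ permEntry n τ (P+1) ≤ n
      ∧ permEntry n τ (P+2) ≤ n)
    ∧ (P = 0 → permEntry n τ (P-1) = 0 ∧ permEntry n τ P = 0)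
    ∧ (1 ≤ P → 1 ≤ permEntry n τ P ∧ permEntry n τ (P-1) ≠ permEntry n τ P)
    ∧ (P + 1 ≤ n → 1 ≤ permEntry n τ (P+1) ∧ permEntry n τ P ≠ permEntry n τ (P+1))
    ∧ (P + 2 ≤ n → 1 ≤ permEntry n τ (P+2) ∧ permEntry n τ (P+1) ≠ permEntry n τ (P+2))
    ∧ (P = n → permEntry n τ (P+1) = 0)
    ∧ (P + 1 = n → permEntry n τ (P+2) = 0) :=
  facts τ ⟨P, by omega⟩ hn

lemma indU (P n a b c d e f : ℕ) (hP : P ≤ n) (hn : 1 ≤ n)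
    (fa : a ≤ n) (fb : b ≤ n) (fc : c ≤ n) (fd : d ≤ n)
    (f1 : P = 0 → a = 0 ∧ b = 0)
    (f2 : 1 ≤ P → 1 ≤ b ∧ a ≠ b)
    (f3 : P + 1 ≤ n → 1 ≤ c ∧ b ≠ c)
    (f4 : P + 2 ≤ n → 1 ≤ d ∧ c ≠ d)
    (f5 : P = n → c = 0)
    (f6 : P + 1 = n → d = 0)
    (hef : P = n → e = a ∧ f = b) :
    (if (if P = n then (if e < f then 0 else 1)
         else if b < c then (if P + 1 = n then 1 else if d < c then 0 else 2)
         else if a < b then 0 else 2) = 0 then (1:ℕ) else 0)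
    = (if 1 ≤ P ∧ P ≤ n - 1 ∧ a < b ∧ c < b then 1 else 0)
      + (if 0 ≤ P ∧ P + 1 ≤ n - 1 ∧ b < c ∧ d < c then 1 else 0)
      + (if P = n ∧ e < f then 1 else 0) := by
  split_ifs <;> first | contradiction | omega

lemma indU1 (P n a b c d e f : ℕ) (hP : P ≤ n) (hn : 1 ≤ n)
    (fa : a ≤ n) (fb : b ≤ n) (fc : c ≤ n) (fd : d ≤ n)
    (f1 : P = 0 → a = 0 ∧ b = 0)
    (f2 : 1 ≤ P → 1 ≤ b ∧ a ≠ b)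
    (f3 : P + 1 ≤ n → 1 ≤ c ∧ b ≠ c)
    (f4 : P + 2 ≤ n → 1 ≤ d ∧ c ≠ d)
    (f5 : P = n → c = 0)
    (f6 : P + 1 = n → d = 0)
    (hef : P = n → e = a ∧ f = b) :
    (if (if P = n then (if e < f then 0 else 1)
         else if b < c then (if P + 1 = n then 1 else if d < c then 0 else 2)
         else if a < b then 0 else 2) = 1 then (1:ℕ) else 0)
    = (if P = n ∧ ¬ e < f then 1 else 0)
      + (if P + 1 = n ∧ b < c then 1 else 0) := by
  split_ifs <;> first | contradiction | omega

lemma indP (P n a b c d : ℕ) (hP : P ≤ n) (hn : 1 ≤ n)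
    (fa : a ≤ n) (fb : b ≤ n) (fc : c ≤ n) (fd : d ≤ n)
    (f1 : P = 0 → a = 0 ∧ b = 0)
    (f2 : 1 ≤ P → 1 ≤ b ∧ a ≠ b)
    (f3 : P + 1 ≤ n → 1 ≤ c ∧ b ≠ c)
    (f4 : P + 2 ≤ n → 1 ≤ d ∧ c ≠ d)
    (f5 : P = n → c = 0)
    (f6 : P + 1 = n → d = 0) :
    (if (if P = 0 ∨ P = n then 0
         else if (2 ≤ P ∧ a < b ∧ c < b) ∨ (P + 1 ≤ n - 1 ∧ b < c ∧ d < c) then 0 else 1) = 0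
      then (1:ℕ) else 0)
    = (if P = 0 then 1 else 0) + (if P = n then 1 else 0)
      + (if 2 ≤ P ∧ P ≤ n - 1 ∧ a < b ∧ c < b then 1 else 0)
      + (if 1 ≤ P ∧ P + 1 ≤ n - 1 ∧ b < c ∧ d < c then 1 else 0) := by
  split_ifs <;> first | contradiction | omega

lemma sum_desc (hn : 1 ≤ n) (lo : ℕ) (hlo : 1 ≤ lo) :
    ∑ P ∈ Finset.range (n+1), (if lo ≤ P ∧ P ≤ n - 1
        ∧ permEntry n τ (P-1) < permEntry n τ P ∧ permEntry n τ (P+1) < permEntry n τ P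
      then (1:ℕ) else 0)
    = ((Finset.Icc lo (n-1)).filter (fun i =>
        permEntry n τ (i-1) < permEntry n τ i ∧ permEntry n τ (i+1) < permEntry n τ i)).card := by
  have hsub : Finset.Icc lo (n-1) ⊆ Finset.range (n+1) := fun i hi => by
    rw [Finset.mem_Icc] at hi; rw [Finset.mem_range]; omega
  have h1 := Finset.sum_subset hsub (f := fun P => (if lo ≤ P ∧ P ≤ n - 1
        ∧ permEntry n τ (P-1) < permEntry n τ P ∧ permEntry n τ (P+1) < permEntry n τ P
      then (1:ℕ) else 0)) (fun i _ hni => by rw [Finset.mem_Icc] at hni; exact if_neg (by omega))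
  rw [← h1, Finset.card_filter]
  apply Finset.sum_congr rfl
  intro i hi
  rw [Finset.mem_Icc] at hi
  exact if_congr ⟨fun h => h.2.2, fun h => ⟨hi.1, hi.2, h⟩⟩ rfl rfl

lemma sum_asc (hn : 1 ≤ n) (lo : ℕ) :
    ∑ P ∈ Finset.range (n+1), (if lo ≤ P ∧ P + 1 ≤ n - 1
        ∧ permEntry n τ P < permEntry n τ (P+1) ∧ permEntry n τ (P+2) < permEntry n τ (P+1)
      then (1:ℕ) else 0)
    = ((Finset.Icc (lo+1) (n-1)).filter (fun i =>
        permEntry n τ (i-1) < permEntry n τ i ∧ permEntry n τ (i+1) < permEntry n τ i)).card := by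
  have hstep : ∀ P : ℕ, (if lo ≤ P ∧ P + 1 ≤ n - 1
        ∧ permEntry n τ P < permEntry n τ (P+1) ∧ permEntry n τ (P+2) < permEntry n τ (P+1)
      then (1:ℕ) else 0)
      = (fun j => if lo + 1 ≤ j ∧ j ≤ n - 1
          ∧ permEntry n τ (j-1) < permEntry n τ j ∧ permEntry n τ (j+1) < permEntry n τ j
        then (1:ℕ) else 0) (P + 1) := by
    intro P
    apply if_congr _ rfl rfl
    rw [show P+1-1 = P from rfl, show P+1+1 = P+2 from rfl]
    exact and_congr (by omega) Iff.rfl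
  rw [Finset.sum_congr rfl (fun P _ => hstep P)]
  have hre : ∑ P ∈ Finset.range (n+1), (fun j => if lo + 1 ≤ j ∧ j ≤ n - 1
          ∧ permEntry n τ (j-1) < permEntry n τ j ∧ permEntry n τ (j+1) < permEntry n τ j
        then (1:ℕ) else 0) (P + 1)
      = ∑ j ∈ Finset.Ico 1 (n+2), (if lo + 1 ≤ j ∧ j ≤ n - 1
          ∧ permEntry n τ (j-1) < permEntry n τ j ∧ permEntry n τ (j+1) < permEntry n τ j
        then (1:ℕ) else 0) := by
    rw [Finset.sum_Ico_eq_sum_range, show n+2-1 = n+1 from rfl]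
    apply Finset.sum_congr rfl
    intro P _
    rw [Nat.add_comm 1 P]
  rw [hre]
  have hsub : Finset.Icc (lo+1) (n-1) ⊆ Finset.Ico 1 (n+2) := fun i hi => by
    rw [Finset.mem_Icc] at hi; rw [Finset.mem_Ico]; omega
  have h1 := Finset.sum_subset hsub (f := fun j => (if lo + 1 ≤ j ∧ j ≤ n - 1
          ∧ permEntry n τ (j-1) < permEntry n τ j ∧ permEntry n τ (j+1) < permEntry n τ j
        then (1:ℕ) else 0)) (fun i _ hni => by rw [Finset.mem_Icc] at hni; exact if_neg (by omega))
  rw [← h1, Finset.card_filter]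
  apply Finset.sum_congr rfl
  intro i hi
  rw [Finset.mem_Icc] at hi
  exact if_congr ⟨fun h => h.2.2, fun h => ⟨hi.1, hi.2, h⟩⟩ rfl rfl

lemma deltaU_le (P : ℕ) : deltaU n τ P ≤ 2 := by
  unfold deltaU; split_ifs <;> omega

lemma deltaP_le (P : ℕ) : deltaP n τ P ≤ 1 := by
  unfold deltaP; split_ifs <;> omega

lemma cardU0 (hn : 1 ≤ n) :
    ((Finset.range (n+1)).filter (fun P => deltaU n τ P = 0)).card = udRunCount n τ := by
  rw [Finset.card_filter]
  have point : ∀ P ∈ Finset.range (n+1), (if deltaU n τ P = 0 then (1:ℕ) else 0)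
      = ((if 1 ≤ P ∧ P ≤ n - 1 ∧ permEntry n τ (P-1) < permEntry n τ P ∧ permEntry n τ (P+1) < permEntry n τ P then 1 else 0)
        + (if 0 ≤ P ∧ P + 1 ≤ n - 1 ∧ permEntry n τ P < permEntry n τ (P+1) ∧ permEntry n τ (P+2) < permEntry n τ (P+1) then 1 else 0))
        + (if P = n ∧ permEntry n τ (n-1) < permEntry n τ n then 1 else 0) := by
    intro P hP
    rw [Finset.mem_range] at hP
    obtain ⟨⟨fa, fb, fc, fd⟩, f1, f2, f3, f4, f5, f6⟩ := facts' τ hn P (by omega)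
    have hd : deltaU n τ P
        = if P = n then (if permEntry n τ (n-1) < permEntry n τ n then 0 else 1)
          else if permEntry n τ P < permEntry n τ (P+1) then
            (if P+1 = n then 1 else if permEntry n τ (P+2) < permEntry n τ (P+1) then 0 else 2)
          else if permEntry n τ (P-1) < permEntry n τ P then 0 else 2 := rfl
    rw [hd, indU P n _ _ _ _ _ _ (by omega) hn fa fb fc fd f1 f2 f3 f4 f5 f6 (fun h => ⟨by rw [h], by rw [h]⟩)]
  rw [Finset.sum_congr rfl point, Finset.sum_add_distrib, Finset.sum_add_distrib]
  rw [sum_desc τ hn 1 (le_refl 1), sum_asc τ hn 0]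
  rw [Finset.sum_eq_single_of_mem n (Finset.mem_range.mpr (by omega))
    (fun b _ hb => if_neg (fun hc => hb hc.1))]
  rw [if_congr (and_iff_right rfl) rfl rfl, udrun_eq τ hn]
  rw [show (0:ℕ)+1 = 1 from rfl]
  omega

lemma cardU1 (hn : 1 ≤ n) :
    ((Finset.range (n+1)).filter (fun P => deltaU n τ P = 1)).card = 1 := by
  rw [Finset.card_filter]
  have point : ∀ P ∈ Finset.range (n+1), (if deltaU n τ P = 1 then (1:ℕ) else 0)
      = (if P = n ∧ ¬ permEntry n τ (n-1) < permEntry n τ n then 1 else 0)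
        + (if P + 1 = n ∧ permEntry n τ P < permEntry n τ (P+1) then 1 else 0) := by
    intro P hP
    rw [Finset.mem_range] at hP
    obtain ⟨⟨fa, fb, fc, fd⟩, f1, f2, f3, f4, f5, f6⟩ := facts' τ hn P (by omega)
    have hd : deltaU n τ P
        = if P = n then (if permEntry n τ (n-1) < permEntry n τ n then 0 else 1)
          else if permEntry n τ P < permEntry n τ (P+1) then
            (if P+1 = n then 1 else if permEntry n τ (P+2) < permEntry n τ (P+1) then 0 else 2)
          else if permEntry n τ (P-1) < permEntry n τ P then 0 else 2 := rfl
    rw [hd, indU1 P n _ _ _ _ _ _ (by omega) hn fa fb fc fd f1 f2 f3 f4 f5 f6 (fun h => ⟨by rw [h], by rw [h]⟩)]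
  rw [Finset.sum_congr rfl point, Finset.sum_add_distrib]
  rw [Finset.sum_eq_single_of_mem n (Finset.mem_range.mpr (by omega))
    (fun b _ hb => if_neg (fun hc => hb hc.1))]
  rw [Finset.sum_eq_single_of_mem (n-1) (Finset.mem_range.mpr (by omega))
    (fun b _ hb => if_neg (fun hc => hb (by omega)))]
  rw [if_congr (and_iff_right rfl) rfl rfl]
  rw [show n-1+1 = n by omega]
  rw [if_congr (and_iff_right rfl) rfl rfl]
  split_ifs <;> omega

lemma cardU2 (hn : 1 ≤ n) :
    ((Finset.range (n+1)).filter (fun P => deltaU n τ P = 2)).card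
      = n - udRunCount n τ := by
  have htot : ((Finset.range (n+1)).filter (fun P => deltaU n τ P = 0)).card
      + ((Finset.range (n+1)).filter (fun P => deltaU n τ P = 1)).card
      + ((Finset.range (n+1)).filter (fun P => deltaU n τ P = 2)).card = n + 1 := by
    rw [Finset.card_filter, Finset.card_filter, Finset.card_filter,
      ← Finset.sum_add_distrib, ← Finset.sum_add_distrib]
    have : ∀ P ∈ Finset.range (n+1),
        ((if deltaU n τ P = 0 then (1:ℕ) else 0) + (if deltaU n τ P = 1 then 1 else 0))
          + (if deltaU n τ P = 2 then 1 else 0) = 1 := by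
      intro P _
      have := deltaU_le τ P
      split_ifs <;> omega
    rw [Finset.sum_congr rfl this, Finset.sum_const, Finset.card_range, smul_eq_mul, mul_one]
  have h0 := cardU0 τ hn
  have h1 := cardU1 τ hn
  have hle := udrun_le hn τ
  omega

lemma cardP0 (hn : 1 ≤ n) :
    ((Finset.range (n+1)).filter (fun P => deltaP n τ P = 0)).card
      = 2 * intPeakCount n τ + 2 := by
  rw [Finset.card_filter]
  have point : ∀ P ∈ Finset.range (n+1), (if deltaP n τ P = 0 then (1:ℕ) else 0)
      = (((if P = 0 then 1 else 0) + (if P = n then 1 else 0))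
        + (if 2 ≤ P ∧ P ≤ n - 1 ∧ permEntry n τ (P-1) < permEntry n τ P ∧ permEntry n τ (P+1) < permEntry n τ P then 1 else 0))
        + (if 1 ≤ P ∧ P + 1 ≤ n - 1 ∧ permEntry n τ P < permEntry n τ (P+1) ∧ permEntry n τ (P+2) < permEntry n τ (P+1) then 1 else 0) := by
    intro P hP
    rw [Finset.mem_range] at hP
    obtain ⟨⟨fa, fb, fc, fd⟩, f1, f2, f3, f4, f5, f6⟩ := facts' τ hn P (by omega)
    have hd : deltaP n τ P
        = if P = 0 ∨ P = n then 0
          else if (2 ≤ P ∧ permEntry n τ (P-1) < permEntry n τ P ∧ permEntry n τ (P+1) < permEntry n τ P)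
              ∨ (P + 1 ≤ n - 1 ∧ permEntry n τ P < permEntry n τ (P+1) ∧ permEntry n τ (P+2) < permEntry n τ (P+1))
            then 0 else 1 := rfl
    rw [hd, indP P n _ _ _ _ (by omega) hn fa fb fc fd f1 f2 f3 f4 f5 f6]
  rw [Finset.sum_congr rfl point, Finset.sum_add_distrib, Finset.sum_add_distrib,
    Finset.sum_add_distrib]
  rw [sum_desc τ hn 2 (by omega), sum_asc τ hn 1]
  rw [Finset.sum_eq_single_of_mem 0 (Finset.mem_range.mpr (by omega))
    (fun b _ hb => if_neg hb)]
  rw [Finset.sum_eq_single_of_mem n (Finset.mem_range.mpr (by omega))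
    (fun b _ hb => if_neg hb)]
  rw [if_pos rfl, if_pos rfl, intPeakCount]
  rw [show (1:ℕ)+1 = 2 from rfl]
  omega

lemma cardP1 (hn : 1 ≤ n) :
    ((Finset.range (n+1)).filter (fun P => deltaP n τ P = 1)).card
      = n - 1 - 2 * intPeakCount n τ := by
  have htot : ((Finset.range (n+1)).filter (fun P => deltaP n τ P = 0)).card
      + ((Finset.range (n+1)).filter (fun P => deltaP n τ P = 1)).card = n + 1 := by
    rw [Finset.card_filter, Finset.card_filter, ← Finset.sum_add_distrib]
    have : ∀ P ∈ Finset.range (n+1),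
        (if deltaP n τ P = 0 then (1:ℕ) else 0) + (if deltaP n τ P = 1 then 1 else 0) = 1 := by
      intro P _
      have := deltaP_le τ P
      split_ifs <;> omega
    rw [Finset.sum_congr rfl this, Finset.sum_const, Finset.card_range, smul_eq_mul, mul_one]
  have h0 := cardP0 τ hn
  have hb := ipk_two_le hn τ
  omega

end Cards
section Poly

open Polynomial

noncomputable def Apoly (n : ℕ) : Polynomial ℚ :=
  ∑ σ : Equiv.Perm (Fin n), Polynomial.X ^ (udRunCount n σ)

noncomputable def Bpoly (n : ℕ) : Polynomial ℚ :=
  ∑ σ : Equiv.Perm (Fin n),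
    (2 * Polynomial.X) ^ (intPeakCount n σ) * (1 + Polynomial.X) ^ (n - 1 - intPeakCount n σ)

lemma sum_fiber_pow {n : ℕ} (hn : 1 ≤ n) :
    UDpoly n = Apoly n := by
  rw [UDpoly, Apoly]
  rw [← Finset.sum_fiberwise_of_maps_to (g := fun σ => udRunCount n σ)
    (t := Finset.range (n+1)) (fun σ _ => Finset.mem_range.mpr (by
      show udRunCount n σ < n + 1
      have := udrun_le hn σ; omega)) (fun σ => Polynomial.X ^ (udRunCount n σ) : Equiv.Perm (Fin n) → Polynomial ℚ)]
  apply Finset.sum_congr rfl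
  intro k _
  have : ∀ σ ∈ Finset.univ.filter (fun σ : Equiv.Perm (Fin n) => udRunCount n σ = k),
      (Polynomial.X : Polynomial ℚ) ^ (udRunCount n σ) = Polynomial.X ^ k := by
    intro σ hσ
    rw [Finset.mem_filter] at hσ
    rw [hσ.2]
  rw [Finset.sum_congr rfl this, Finset.sum_const, udRunNum, nsmul_eq_mul]

lemma sum_fiber_ipk {n : ℕ} (hn : 1 ≤ n) :
    ∑ k ∈ Finset.range ((n - 1) / 2 + 1),
        (intPeakNum n k : Polynomial ℚ) * (2 * Polynomial.X) ^ k
          * (1 + Polynomial.X) ^ (n - 1 - k)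
      = Bpoly n := by
  rw [Bpoly]
  rw [← Finset.sum_fiberwise_of_maps_to (g := fun σ => intPeakCount n σ)
    (t := Finset.range ((n-1)/2 + 1)) (fun σ _ => Finset.mem_range.mpr (by
      show intPeakCount n σ < (n-1)/2 + 1
      have := ipk_two_le hn σ; omega))
    (fun σ => (2 * Polynomial.X) ^ (intPeakCount n σ) * (1 + Polynomial.X) ^ (n - 1 - intPeakCount n σ)
      : Equiv.Perm (Fin n) → Polynomial ℚ)]
  apply Finset.sum_congr rfl
  intro k _
  have : ∀ σ ∈ Finset.univ.filter (fun σ : Equiv.Perm (Fin n) => intPeakCount n σ = k),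
      (2 * Polynomial.X : Polynomial ℚ) ^ (intPeakCount n σ)
          * (1 + Polynomial.X) ^ (n - 1 - intPeakCount n σ)
        = (2 * Polynomial.X) ^ k * (1 + Polynomial.X) ^ (n - 1 - k) := by
    intro σ hσ
    rw [Finset.mem_filter] at hσ
    rw [hσ.2]
  rw [Finset.sum_congr rfl this, Finset.sum_const, intPeakNum, nsmul_eq_mul, mul_assoc]

lemma Apoly_succ {n : ℕ} (hn : 1 ≤ n) :
    Apoly (n+1) = ∑ τ : Equiv.Perm (Fin n), ∑ P ∈ Finset.range (n+1),
      (Polynomial.X : Polynomial ℚ) ^ (udRunCount n τ + deltaU n τ P) := by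
  rw [Apoly, ← Equiv.sum_comp (insEquiv n)
    (fun σ => (Polynomial.X : Polynomial ℚ) ^ (udRunCount (n+1) σ)), Fintype.sum_prod_type]
  apply Finset.sum_congr rfl
  intro τ _
  rw [← Fin.sum_univ_eq_sum_range (fun P =>
    (Polynomial.X : Polynomial ℚ) ^ (udRunCount n τ + deltaU n τ P)) (n+1)]
  apply Finset.sum_congr rfl
  intro p _
  rw [insEquiv_apply, udRun_insMax τ p hn]

lemma Bpoly_succ {n : ℕ} (hn : 1 ≤ n) :
    Bpoly (n+1) = ∑ τ : Equiv.Perm (Fin n), ∑ P ∈ Finset.range (n+1),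
      (2 * Polynomial.X : Polynomial ℚ) ^ (intPeakCount n τ + deltaP n τ P)
        * (1 + Polynomial.X) ^ (n - (intPeakCount n τ + deltaP n τ P)) := by
  rw [Bpoly, ← Equiv.sum_comp (insEquiv n)
    (fun σ => (2 * Polynomial.X : Polynomial ℚ) ^ (intPeakCount (n+1) σ)
      * (1 + Polynomial.X) ^ ((n+1) - 1 - intPeakCount (n+1) σ)), Fintype.sum_prod_type]
  apply Finset.sum_congr rfl
  intro τ _
  rw [← Fin.sum_univ_eq_sum_range (fun P =>
    (2 * Polynomial.X : Polynomial ℚ) ^ (intPeakCount n τ + deltaP n τ P)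
      * (1 + Polynomial.X) ^ (n - (intPeakCount n τ + deltaP n τ P))) (n+1)]
  apply Finset.sum_congr rfl
  intro p _
  rw [insEquiv_apply, ipk_insMax τ p hn, Nat.add_sub_cancel]

lemma sum_slots_U {n : ℕ} (hn : 1 ≤ n) (τ : Equiv.Perm (Fin n)) :
    ∑ P ∈ Finset.range (n+1), (Polynomial.X : Polynomial ℚ) ^ (deltaU n τ P)
      = (udRunCount n τ : Polynomial ℚ) + Polynomial.X
        + ((n - udRunCount n τ : ℕ) : Polynomial ℚ) * Polynomial.X ^ 2 := by
  have point : ∀ P ∈ Finset.range (n+1), (Polynomial.X : Polynomial ℚ) ^ (deltaU n τ P)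
      = (if deltaU n τ P = 0 then (1 : Polynomial ℚ) else 0)
        + (if deltaU n τ P = 1 then Polynomial.X else 0)
        + (if deltaU n τ P = 2 then Polynomial.X ^ 2 else 0) := by
    intro P _
    have h2 := deltaU_le τ P
    have : deltaU n τ P = 0 ∨ deltaU n τ P = 1 ∨ deltaU n τ P = 2 := by omega
    rcases this with h | h | h <;> rw [h] <;> simp
  rw [Finset.sum_congr rfl point, Finset.sum_add_distrib, Finset.sum_add_distrib,
    ← Finset.sum_filter, ← Finset.sum_filter, ← Finset.sum_filter,
    Finset.sum_const, Finset.sum_const, Finset.sum_const,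
    cardU0 τ hn, cardU1 τ hn, cardU2 τ hn]
  rw [nsmul_eq_mul, nsmul_eq_mul, nsmul_eq_mul, mul_one]
  push_cast
  ring

lemma sum_slots_P {n : ℕ} (hn : 1 ≤ n) (τ : Equiv.Perm (Fin n)) :
    ∑ P ∈ Finset.range (n+1),
        (2 * Polynomial.X : Polynomial ℚ) ^ (intPeakCount n τ + deltaP n τ P)
          * (1 + Polynomial.X) ^ (n - (intPeakCount n τ + deltaP n τ P))
      = ((2 * intPeakCount n τ + 2 : ℕ) : Polynomial ℚ)
          * ((2 * Polynomial.X) ^ (intPeakCount n τ) * (1 + Polynomial.X) ^ (n - intPeakCount n τ))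
        + ((n - 1 - 2 * intPeakCount n τ : ℕ) : Polynomial ℚ)
          * ((2 * Polynomial.X) ^ (intPeakCount n τ + 1)
              * (1 + Polynomial.X) ^ (n - 1 - intPeakCount n τ)) := by
  have hip := ipk_two_le hn τ
  have point : ∀ P ∈ Finset.range (n+1),
      (2 * Polynomial.X : Polynomial ℚ) ^ (intPeakCount n τ + deltaP n τ P)
          * (1 + Polynomial.X) ^ (n - (intPeakCount n τ + deltaP n τ P))
      = (if deltaP n τ P = 0 then
          (2 * Polynomial.X) ^ (intPeakCount n τ) * (1 + Polynomial.X) ^ (n - intPeakCount n τ) else 0)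
        + (if deltaP n τ P = 1 then
          (2 * Polynomial.X) ^ (intPeakCount n τ + 1) * (1 + Polynomial.X) ^ (n - 1 - intPeakCount n τ) else 0) := by
    intro P _
    have h2 := deltaP_le τ P
    have : deltaP n τ P = 0 ∨ deltaP n τ P = 1 := by omega
    rcases this with h | h <;> rw [h] <;> simp
    · rw [show n - (intPeakCount n τ + 1) = n - 1 - intPeakCount n τ by omega]
  rw [Finset.sum_congr rfl point, Finset.sum_add_distrib,
    ← Finset.sum_filter, ← Finset.sum_filter,
    Finset.sum_const, Finset.sum_const,
    cardP0 τ hn, cardP1 τ hn]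
  rw [nsmul_eq_mul, nsmul_eq_mul]

end Poly
section Main

open Polynomial

lemma hA_rec {n : ℕ} (hn : 1 ≤ n) :
    Apoly (n+1) = (Polynomial.X - Polynomial.X^3) * derivative (Apoly n)
      + (Polynomial.X + (n : Polynomial ℚ) * Polynomial.X^2) * Apoly n := by
  rw [Apoly_succ hn, Apoly, derivative_sum, Finset.mul_sum, Finset.mul_sum,
    ← Finset.sum_add_distrib]
  apply Finset.sum_congr rfl
  intro τ _
  have hfac : ∑ P ∈ Finset.range (n+1),
      (Polynomial.X : Polynomial ℚ) ^ (udRunCount n τ + deltaU n τ P)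
      = Polynomial.X ^ (udRunCount n τ)
        * ∑ P ∈ Finset.range (n+1), (Polynomial.X : Polynomial ℚ) ^ (deltaU n τ P) := by
    rw [Finset.mul_sum]
    exact Finset.sum_congr rfl fun P _ => pow_add _ _ _
  rw [hfac, sum_slots_U hn τ, derivative_X_pow]
  have hle := udrun_le hn τ
  obtain ⟨v, hv⟩ : ∃ v, udRunCount n τ = v + 1 :=
    ⟨udRunCount n τ - 1, by have := udrun_pos hn τ; omega⟩
  rw [hv]
  simp only [Nat.add_sub_cancel]
  rw [Polynomial.C_eq_natCast, Nat.cast_sub (by omega : v + 1 ≤ n)]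
  push_cast
  ring

lemma hB_rec {n : ℕ} (hn : 1 ≤ n) :
    Bpoly (n+1) = (2 + 2*Polynomial.X + (2*(n : Polynomial ℚ) - 2) * Polynomial.X^2) * Bpoly n
      + (2*Polynomial.X - 2*Polynomial.X^3) * derivative (Bpoly n) := by
  rw [Bpoly_succ hn, Bpoly, derivative_sum, Finset.mul_sum, Finset.mul_sum,
    ← Finset.sum_add_distrib]
  apply Finset.sum_congr rfl
  intro τ _
  rw [sum_slots_P hn τ]
  have h2k := ipk_two_le hn τ
  obtain ⟨e, he⟩ : ∃ e, n - 1 = intPeakCount n τ + e := ⟨n - 1 - intPeakCount n τ, by omega⟩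
  have hke : intPeakCount n τ ≤ e := by omega
  have h1 : n - intPeakCount n τ = e + 1 := by omega
  have h2 : n - 1 - intPeakCount n τ = e := by omega
  have h3 : n - 1 - 2 * intPeakCount n τ = e - intPeakCount n τ := by omega
  have hn4 : (n : Polynomial ℚ) = (intPeakCount n τ : Polynomial ℚ) + (e : Polynomial ℚ) + 1 := by
    have : n = intPeakCount n τ + e + 1 := by omega
    exact_mod_cast congrArg (Nat.cast : ℕ → Polynomial ℚ) this
  rw [h1, h2, h3, hn4]
  set k := intPeakCount n τ with hk
  clear_value k
  rw [derivative_mul, derivative_pow, derivative_pow]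
  have hd2X : derivative (2 * Polynomial.X : Polynomial ℚ) = 2 := by
    rw [derivative_mul, derivative_X]
    simp
  have hd1X : derivative (1 + Polynomial.X : Polynomial ℚ) = 1 := by
    simp
  rw [hd2X, hd1X, Polynomial.C_eq_natCast, Polynomial.C_eq_natCast,
    Nat.cast_sub hke]
  rcases Nat.eq_zero_or_pos k with rfl | hkpos
  · rcases Nat.eq_zero_or_pos e with rfl | hepos
    · push_cast
      ring
    · obtain ⟨e', rfl⟩ : ∃ e', e = e' + 1 := ⟨e - 1, by omega⟩
      simp only [Nat.add_sub_cancel]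
      push_cast
      ring
  · obtain ⟨k', rfl⟩ : ∃ k', k = k' + 1 := ⟨k - 1, by omega⟩
    rcases Nat.eq_zero_or_pos e with rfl | hepos
    · omega
    · obtain ⟨e', rfl⟩ : ∃ e', e = e' + 1 := ⟨e - 1, by omega⟩
      simp only [Nat.add_sub_cancel]
      push_cast
      ring

lemma base_case : (2 : Polynomial ℚ)^(1-1) * Apoly 1 = Polynomial.X * Bpoly 1 := by
  have hu : ∀ σ : Equiv.Perm (Fin 1), udRunCount 1 σ = 1 := by
    intro σ
    rw [udRunCount, if_neg one_ne_zero, show (1:ℕ)-1 = 0 from rfl,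
      Finset.Icc_eq_empty (by omega), Finset.filter_empty, Finset.card_empty]
  have hp : ∀ σ : Equiv.Perm (Fin 1), intPeakCount 1 σ = 0 := by
    intro σ
    rw [intPeakCount, show (1:ℕ)-1 = 0 from rfl,
      Finset.Icc_eq_empty (by omega), Finset.filter_empty, Finset.card_empty]
  have e1 : Apoly 1 = ∑ _σ : Equiv.Perm (Fin 1), (Polynomial.X : Polynomial ℚ)^1 :=
    Finset.sum_congr rfl (fun σ _ => by rw [hu σ])
  have e2 : Bpoly 1 = ∑ _σ : Equiv.Perm (Fin 1),
      ((2*Polynomial.X : Polynomial ℚ)^0 * (1+Polynomial.X)^(1-1-0)) :=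
    Finset.sum_congr rfl (fun σ _ => by rw [hp σ])
  rw [e1, e2, Finset.sum_const, Finset.sum_const, Finset.card_univ]
  simp [Fintype.card_perm]

lemma main_ind : ∀ m : ℕ,
    (2 : Polynomial ℚ)^((m+1)-1) * Apoly (m+1) = Polynomial.X * Bpoly (m+1) := by
  intro m
  induction m with
  | zero => exact base_case
  | succ m ih =>
    simp only [Nat.add_sub_cancel] at ih ⊢
    have hn : 1 ≤ m + 1 := by omega
    have H' : (2 : Polynomial ℚ)^m * derivative (Apoly (m+1))
        = Bpoly (m+1) + Polynomial.X * derivative (Bpoly (m+1)) := by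
      have hD := congrArg derivative ih
      rw [derivative_mul, derivative_mul, derivative_X, one_mul] at hD
      have h20 : derivative ((2:Polynomial ℚ)^m) = 0 := by
        rw [show (2:Polynomial ℚ) = Polynomial.C 2 from (Polynomial.C_eq_natCast 2).symm.trans (by norm_num), ← Polynomial.C_pow, Polynomial.derivative_C]
      rw [h20, zero_mul, zero_add] at hD
      exact hD
    rw [hA_rec hn, hB_rec hn, pow_succ]
    push_cast
    linear_combination (2*(Polynomial.X + ((m:Polynomial ℚ) + 1)*Polynomial.X^2)) * ih
      + (2*(Polynomial.X - Polynomial.X^3)) * H'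

end Main

theorem stmt_17' (n : ℕ) (hn : 1 ≤ n) :
    (2 : Polynomial ℚ) ^ (n - 1) * UDpoly n
      = Polynomial.X * ∑ k ∈ Finset.range ((n - 1) / 2 + 1),
          (intPeakNum n k : Polynomial ℚ) * (2 * Polynomial.X) ^ k
            * (1 + Polynomial.X) ^ (n - 1 - k) := by
  obtain ⟨m, rfl⟩ : ∃ m, n = m + 1 := ⟨n - 1, by omega⟩
  rw [sum_fiber_pow (by omega), sum_fiber_ipk (by omega)]
  exact main_ind m

/-- for `n ≥ 1`,
`2^{n−1}·Λ_n(x) = x·Σ_{k=0}^{⌊(n−1)/2⌋} M(n,k)·(2x)^k·(1+x)^{n−1−k}` in `ℚ[x]`. -/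
theorem stmt_17 (n : ℕ) (hn : 1 ≤ n) :
    (2 : Polynomial ℚ) ^ (n - 1) * UDpoly n
      = Polynomial.X * ∑ k ∈ Finset.range ((n - 1) / 2 + 1),
          (intPeakNum n k : Polynomial ℚ) * (2 * Polynomial.X) ^ k
            * (1 + Polynomial.X) ^ (n - 1 - k) :=
  stmt_17' n hn
end
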